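/- arXiv:2406.09883 — 4 statements merged into one kernel-verified Lean document; each statement's English description precedes it below -/
import Mathlib

section
/- (Hopf–Rinow) If (X,d) is a complete, locally compact length space, then X is a geodesic space: any two points are joined by a geodesic. -/
open Set

/-- The length metric associated with `d`: infimum of lengths of rectifiable curves. -/
noncomputable def lengthMetric {X : Type*} [MetricSpace X] (x y : X) : ENNReal :=
  ⨅ σ : {σ : ℝ → X // ContinuousOn σ (Set.Icc 0 1) ∧ σ 0 = x ∧ σ 1 = y ∧
      eVariationOn σ (Set.Icc 0 1) ≠ ⊤},
    eVariationOn σ.1 (Set.Icc 0 1)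

namespace HRaux

variable {X : Type*} [MetricSpace X]

theorem exists_curve (hlen : ∀ x y : X, lengthMetric x y = ENNReal.ofReal (dist x y))
    (x y : X) {ε : ℝ} (hε : 0 < ε) :
    ∃ σ : ℝ → X, ContinuousOn σ (Set.Icc 0 1) ∧ σ 0 = x ∧ σ 1 = y ∧
      eVariationOn σ (Set.Icc 0 1) < ENNReal.ofReal (dist x y + ε) := by
  have hlt : lengthMetric x y < ENNReal.ofReal (dist x y + ε) := by
    rw [hlen x y, ENNReal.ofReal_add dist_nonneg hε.le]
    exact ENNReal.lt_add_right ENNReal.ofReal_ne_top (by simp [hε])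
  rw [lengthMetric, iInf_lt_iff] at hlt
  obtain ⟨⟨σ, hc, h0, h1, _⟩, hσ⟩ := hlt
  exact ⟨σ, hc, h0, h1, hσ⟩

/-- Approximate intermediate points at parameter `t`. -/
theorem interm (hlen : ∀ x y : X, lengthMetric x y = ENNReal.ofReal (dist x y))
    (x y : X) {t ε : ℝ} (ht0 : 0 ≤ t) (ht1 : t ≤ 1) (hε : 0 < ε) :
    ∃ w : X, dist x w = t * dist x y ∧ dist x w + dist w y < dist x y + ε := by
  obtain ⟨σ, hc, h0, h1, hV⟩ := exists_curve hlen x y hε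
  have hφ : ContinuousOn (fun s => dist x (σ s)) (Set.Icc 0 1) :=
    (continuous_dist.comp (Continuous.prodMk_right x)).comp_continuousOn hc
  have hmem : t * dist x y ∈ Set.Icc (dist x (σ 0)) (dist x (σ 1)) := by
    rw [h0, h1]
    simp only [dist_self, Set.mem_Icc]
    exact ⟨mul_nonneg ht0 dist_nonneg, mul_le_of_le_one_left dist_nonneg ht1⟩
  obtain ⟨s, hs, hsd⟩ := intermediate_value_Icc zero_le_one hφ hmem
  refine ⟨σ s, hsd, ?_⟩
  have hA : edist x (σ s) ≤ eVariationOn σ (Set.Icc 0 1 ∩ Set.Icc 0 s) := by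
    conv_lhs => rw [← h0]
    exact eVariationOn.edist_le σ ⟨Set.left_mem_Icc.2 zero_le_one, Set.left_mem_Icc.2 hs.1⟩
      ⟨hs, Set.right_mem_Icc.2 hs.1⟩
  have hB : edist (σ s) y ≤ eVariationOn σ (Set.Icc 0 1 ∩ Set.Icc s 1) := by
    conv_lhs => rw [← h1]
    exact eVariationOn.edist_le σ ⟨hs, Set.left_mem_Icc.2 hs.2⟩
      ⟨Set.right_mem_Icc.2 zero_le_one, Set.right_mem_Icc.2 hs.2⟩
  have hsum := eVariationOn.Icc_add_Icc σ (s := Set.Icc (0:ℝ) 1) hs.1 hs.2 hs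
  rw [Set.inter_self] at hsum
  have key : edist x (σ s) + edist (σ s) y < ENNReal.ofReal (dist x y + ε) := by
    calc edist x (σ s) + edist (σ s) y
        ≤ eVariationOn σ (Set.Icc 0 1 ∩ Set.Icc 0 s) +
            eVariationOn σ (Set.Icc 0 1 ∩ Set.Icc s 1) := add_le_add hA hB
      _ = eVariationOn σ (Set.Icc 0 1) := hsum
      _ < _ := hV
  rw [edist_dist, edist_dist, ← ENNReal.ofReal_add dist_nonneg dist_nonneg] at key
  exact (ENNReal.ofReal_lt_ofReal_iff_of_nonneg
    (add_nonneg dist_nonneg dist_nonneg)).1 key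

/-- Points at exact distance `r` from `x`, almost on the way to `z`. -/
theorem near (hlen : ∀ x y : X, lengthMetric x y = ENNReal.ofReal (dist x y))
    (x z : X) {r ε : ℝ} (hr0 : 0 ≤ r) (hr : r ≤ dist x z) (hε : 0 < ε) :
    ∃ w : X, dist x w = r ∧ dist w z ≤ dist x z - r + ε := by
  rcases eq_or_lt_of_le (dist_nonneg (x := x) (y := z)) with hd | hd
  · have hr0' : r = 0 := le_antisymm (hr.trans_eq hd.symm) hr0
    exact ⟨x, by simp [hr0'], by rw [← hd] at hr ⊢; simp [hr0']; linarith⟩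
  · obtain ⟨w, hw1, hw2⟩ := interm hlen x z (t := r / dist x z)
      (div_nonneg hr0 hd.le) ((div_le_one hd).2 hr) hε
    rw [div_mul_cancel₀ _ (ne_of_gt hd)] at hw1
    exact ⟨w, hw1, by linarith [hw2, hw1]⟩

theorem ball_compact [CompleteSpace X] [LocallyCompactSpace X]
    (hlen : ∀ x y : X, lengthMetric x y = ENNReal.ofReal (dist x y))
    (x : X) (r : ℝ) : IsCompact (Metric.closedBall x r) := by
  by_contra hnc
  set S := {s : ℝ | IsCompact (Metric.closedBall x s)} with hS
  have hdown : ∀ s ∈ S, ∀ s' ≤ s, s' ∈ S := fun s hs s' h =>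
    hs.of_isClosed_subset Metric.isClosed_closedBall (Metric.closedBall_subset_closedBall h)
  -- a small compact ball
  obtain ⟨K, hKc, hK⟩ := exists_compact_mem_nhds x
  obtain ⟨r0, hr0pos, hr0sub⟩ := Metric.nhds_basis_closedBall.mem_iff.1 hK
  have hr0S : r0 ∈ S := hKc.of_isClosed_subset Metric.isClosed_closedBall hr0sub
  have hSne : S.Nonempty := ⟨r0, hr0S⟩
  have hbdd : BddAbove S := ⟨r, fun s hs => by
    by_contra h; push_neg at h; exact hnc (hdown s hs r h.le)⟩
  set b := sSup S with hb
  have hb0 : 0 < b := hr0pos.trans_le (le_csSup hbdd hr0S)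
  -- Step 1: the ball of radius b is compact
  have hbS : IsCompact (Metric.closedBall x b) := by
    refine TotallyBounded.isCompact_of_isClosed ?_ Metric.isClosed_closedBall
    rw [Metric.totallyBounded_iff]
    intro ε hε
    set ε' := min (ε / 2) b with hε'def
    have hε'pos : 0 < ε' := lt_min (by linarith) hb0
    have hε'b : ε' ≤ b := min_le_right _ _
    have hε'ε : ε' ≤ ε / 2 := min_le_left _ _
    -- a compact ball of radius b - ε'/2
    have hsmall : (b - ε' / 2) ∈ S := by
      obtain ⟨s, hsS, hs⟩ := exists_lt_of_lt_csSup hSne (show b - ε' / 2 < b by linarith)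
      exact hdown s hsS _ hs.le
    obtain ⟨F, hFfin, hFcov⟩ := Metric.totallyBounded_iff.1
      ((hsmall : IsCompact (Metric.closedBall x (b - ε' / 2)))).totallyBounded
      (ε' / 2) (by linarith)
    refine ⟨F, hFfin, fun z hz => ?_⟩
    have hzb : dist x z ≤ b := Metric.mem_closedBall'.1 hz
    -- find w in the small ball with dist w z small
    have hmain : ∃ w ∈ Metric.closedBall x (b - ε' / 2), dist w z ≤ 3 * ε' / 4 := by
      rcases le_or_gt (dist x z) (b - ε' / 2) with hcase | hcase
      · exact ⟨z, Metric.mem_closedBall'.2 hcase, by simp; linarith⟩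
      · obtain ⟨w, hw1, hw2⟩ := near hlen x z (r := b - ε' / 2) (by linarith)
          (by linarith) (show (0:ℝ) < ε' / 4 by linarith)
        exact ⟨w, by simp [Metric.mem_closedBall']; rw [dist_comm]; exact hw1.le,
          by linarith⟩
    obtain ⟨w, hw, hwz⟩ := hmain
    have := hFcov hw
    simp only [Set.mem_iUnion] at this ⊢
    obtain ⟨c, hcF, hc⟩ := this
    refine ⟨c, hcF, ?_⟩
    rw [Metric.mem_ball] at hc ⊢
    calc dist z c ≤ dist z w + dist w c := dist_triangle _ _ _
      _ < 3 * ε' / 4 + ε' / 2 := by rw [dist_comm z w]; exact add_lt_add_of_le_of_lt hwz hc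
      _ ≤ ε := by linarith
  -- Step 2: extend beyond b, contradiction
  -- choose compact balls around every point
  have hρ : ∀ y : X, ∃ ρ > 0, IsCompact (Metric.closedBall y ρ) := by
    intro y
    obtain ⟨K, hKc, hK⟩ := exists_compact_mem_nhds y
    obtain ⟨ρ, hρpos, hρsub⟩ := Metric.nhds_basis_closedBall.mem_iff.1 hK
    exact ⟨ρ, hρpos, hKc.of_isClosed_subset Metric.isClosed_closedBall hρsub⟩
  choose ρ hρpos hρcomp using hρ
  obtain ⟨F, hFsub, hFfin, hFcov⟩ := hbS.elim_finite_subcover_image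
    (b := Metric.closedBall x b) (c := fun y => Metric.ball y (ρ y / 2))
    (fun y _ => Metric.isOpen_ball)
    (fun z hz => Set.mem_biUnion hz (Metric.mem_ball_self (half_pos (hρpos z))))
  have hFne : F.Nonempty := by
    obtain ⟨c, hcF, -⟩ := Set.mem_iUnion₂.1 (hFcov (Metric.mem_closedBall_self hb0.le))
    exact ⟨c, hcF⟩
  obtain ⟨δ, hδpos, hδle⟩ : ∃ δ > 0, ∀ y ∈ F, δ ≤ ρ y := by
    have hne' : hFfin.toFinset.Nonempty := by
      rwa [Set.Finite.toFinset_nonempty]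
    refine ⟨hFfin.toFinset.inf' hne' ρ, ?_, fun y hy => ?_⟩
    · exact (Finset.lt_inf'_iff hne').2 fun y _ => hρpos y
    · exact Finset.inf'_le ρ (hFfin.mem_toFinset.2 hy)
  -- the extended ball is compact
  have hext : IsCompact (Metric.closedBall x (b + δ / 4)) := by
    have hcov : Metric.closedBall x (b + δ / 4) ⊆ ⋃ y ∈ F, Metric.closedBall y (ρ y) := by
      intro z hz
      have hzb : dist x z ≤ b + δ / 4 := Metric.mem_closedBall'.1 hz
      have hmain : ∃ w ∈ Metric.closedBall x b, dist w z ≤ δ / 2 := by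
        rcases le_or_gt (dist x z) b with hcase | hcase
        · exact ⟨z, Metric.mem_closedBall'.2 hcase, by simp; positivity⟩
        · obtain ⟨w, hw1, hw2⟩ := near hlen x z (r := b) hb0.le hcase.le
            (show (0:ℝ) < δ / 4 by positivity)
          exact ⟨w, by simp [Metric.mem_closedBall']; rw [dist_comm]; exact hw1.le,
            by linarith⟩
      obtain ⟨w, hw, hwz⟩ := hmain
      obtain ⟨c, hcF, hc⟩ := Set.mem_iUnion₂.1 (hFcov hw)
      rw [Metric.mem_ball] at hc
      refine Set.mem_biUnion hcF ?_
      rw [Metric.mem_closedBall]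
      calc dist z c ≤ dist z w + dist w c := dist_triangle _ _ _
        _ ≤ δ / 2 + ρ c / 2 := add_le_add (by rw [dist_comm]; exact hwz) hc.le
        _ ≤ ρ c := by have := hδle c hcF; linarith
    exact ((hFfin.isCompact_biUnion (fun y _ => hρcomp y)).of_isClosed_subset
      Metric.isClosed_closedBall hcov)
  have : b + δ / 4 ≤ b := le_csSup hbdd hext
  linarith


/-- Exact midpoints. -/
theorem mid [CompleteSpace X] [LocallyCompactSpace X]
    (hlen : ∀ x y : X, lengthMetric x y = ENNReal.ofReal (dist x y)) (a c : X) :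
    ∃ w : X, dist a w ≤ dist a c / 2 ∧ dist w c ≤ dist a c / 2 := by
  set d := dist a c with hd
  have hseq : ∀ n : ℕ, ∃ w : X, dist a w = (1/2) * d ∧
      dist a w + dist w c < d + 1 / (n + 1) :=
    fun n => interm hlen a c (by norm_num) (by norm_num) (by positivity)
  choose u hu1 hu2 using hseq
  have hmem : ∀ n, u n ∈ Metric.closedBall a (d / 2) := fun n => by
    rw [Metric.mem_closedBall', hu1 n]; linarith
  obtain ⟨w, hwmem, φ, hφ, htends⟩ := (ball_compact hlen a (d / 2)).tendsto_subseq hmem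
  refine ⟨w, Metric.mem_closedBall'.1 hwmem, ?_⟩
  have hdist : Filter.Tendsto (fun n => dist (u (φ n)) c) Filter.atTop (nhds (dist w c)) :=
    (htends.dist tendsto_const_nhds : _)
  have hbound : ∀ n, dist (u (φ n)) c ≤ d / 2 + 1 / (n + 1 : ℝ) := by
    intro n
    have h1 := hu1 (φ n); have h2 := hu2 (φ n)
    have hφn : (n : ℝ) + 1 ≤ (φ n : ℝ) + 1 := by
      have h : n ≤ φ n := hφ.le_apply
      exact add_le_add_left (Nat.cast_le.2 h) 1
    have hinv : 1 / ((φ n : ℝ) + 1) ≤ 1 / ((n : ℝ) + 1) :=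
      one_div_le_one_div_of_le (by positivity) hφn
    have : dist (u (φ n)) c < d - dist a (u (φ n)) + 1 / ((φ n : ℝ) + 1) := by
      push_cast at h2 ⊢; linarith
    rw [h1] at this; linarith
  have hlim : Filter.Tendsto (fun n : ℕ => d / 2 + 1 / (n + 1 : ℝ)) Filter.atTop
      (nhds (d / 2)) := by
    have := tendsto_one_div_add_atTop_nhds_zero_nat (𝕜 := ℝ)
    have h := this.const_add (d / 2)
    simpa using h
  exact le_of_tendsto_of_tendsto' hdist hlim hbound

end HRaux

/-- (Hopf–Rinow) A complete, locally compact length space is a geodesic space. -/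
theorem hopf_rinow_geodesic {X : Type*} [MetricSpace X] [CompleteSpace X]
    [LocallyCompactSpace X]
    (hlen : ∀ x y : X, lengthMetric x y = ENNReal.ofReal (dist x y)) :
    ∀ x y : X, ∃ γ : ℝ → X, γ 0 = x ∧ γ 1 = y ∧
      ∀ s ∈ Set.Icc (0:ℝ) 1, ∀ t ∈ Set.Icc (0:ℝ) 1,
        dist (γ s) (γ t) = dist x y * |s - t| := by
  intro x y
  classical
  obtain ⟨m, hm1, hm2⟩ : ∃ m : X → X → X, (∀ a c, dist a (m a c) ≤ dist a c / 2) ∧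
      (∀ a c, dist (m a c) c ≤ dist a c / 2) := by
    choose m h1 h2 using HRaux.mid hlen
    exact ⟨m, h1, h2⟩
  set d := dist x y with hd
  have hd0 : 0 ≤ d := dist_nonneg
  set f : ℕ → ℕ → X := fun n => Nat.rec (motive := fun _ => ℕ → X)
    (fun i => if i = 0 then x else y)
    (fun _ g i => if i % 2 = 0 then g (i / 2) else m (g (i / 2)) (g (i / 2 + 1))) n
    with hf
  have hfsucc : ∀ n i, f (n+1) i =
      if i % 2 = 0 then f n (i / 2) else m (f n (i / 2)) (f n (i / 2 + 1)) :=
    fun n i => rfl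
  have hf0 : ∀ i, f 0 i = if i = 0 then x else y := fun i => rfl
  have hfx : ∀ n, f n 0 = x := by
    intro n; induction n with
    | zero => rfl
    | succ n ih => rw [hfsucc]; simpa using ih
  have hfy : ∀ n, f n (2 ^ n) = y := by
    intro n; induction n with
    | zero => rfl
    | succ n ih =>
      rw [hfsucc]
      have h1 : 2 ^ (n+1) % 2 = 0 := by
        have : 2 ^ (n+1) = 2 * 2 ^ n := by ring
        omega
      have h2 : 2 ^ (n+1) / 2 = 2 ^ n := by
        have : 2 ^ (n+1) = 2 * 2 ^ n := by ring
        omega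
      rw [if_pos h1, h2, ih]
  have hstep : ∀ n, ∀ i < 2 ^ n, dist (f n i) (f n (i+1)) ≤ d / 2 ^ n := by
    intro n
    induction n with
    | zero =>
      intro i hi
      obtain rfl : i = 0 := by omega
      rw [hf0, hf0]
      norm_num [hd]
    | succ n ih =>
      intro i hi
      have h2n : 2 ^ (n+1) = 2 * 2 ^ n := by ring
      rcases Nat.mod_two_eq_zero_or_one i with hpar | hpar
      · have e1 : f (n+1) i = f n (i / 2) := by rw [hfsucc, if_pos hpar]
        have hq1 : (i+1) / 2 = i / 2 := by omega
        have e2 : f (n+1) (i+1) = m (f n (i / 2)) (f n (i / 2 + 1)) := by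
          rw [hfsucc, if_neg (by omega), hq1]
        rw [e1, e2]
        have hilt : i / 2 < 2 ^ n := by omega
        calc dist (f n (i/2)) (m (f n (i/2)) (f n (i/2+1)))
            ≤ dist (f n (i/2)) (f n (i/2+1)) / 2 := hm1 _ _
          _ ≤ (d / 2 ^ n) / 2 := by linarith [ih (i/2) hilt]
          _ = d / 2 ^ (n+1) := by rw [pow_succ]; ring
      · have e1 : f (n+1) i = m (f n (i / 2)) (f n (i / 2 + 1)) := by
          rw [hfsucc, if_neg (by omega)]
        have hq1 : (i+1) / 2 = i / 2 + 1 := by omega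
        have e2 : f (n+1) (i+1) = f n (i / 2 + 1) := by
          rw [hfsucc, if_pos (by omega), hq1]
        rw [e1, e2]
        have hilt : i / 2 < 2 ^ n := by omega
        calc dist (m (f n (i/2)) (f n (i/2+1))) (f n (i/2+1))
            ≤ dist (f n (i/2)) (f n (i/2+1)) / 2 := hm2 _ _
          _ ≤ (d / 2 ^ n) / 2 := by linarith [ih (i/2) hilt]
          _ = d / 2 ^ (n+1) := by rw [pow_succ]; ring
  have hchain : ∀ n i j, i ≤ j → j ≤ 2 ^ n →
      dist (f n i) (f n j) ≤ d * ((j - i : ℕ) : ℝ) / 2 ^ n := by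
    intro n i j hij hj
    have hjj : i + (j - i) = j := by omega
    have hkey : dist (f n i) (f n j) ≤
        ∑ k ∈ Finset.range (j - i), dist (f n (i + k)) (f n (i + k + 1)) := by
      have h := dist_le_range_sum_dist (fun k => f n (i + k)) (j - i)
      simpa [hjj, Nat.add_assoc] using h
    have hsum : ∑ k ∈ Finset.range (j - i), dist (f n (i + k)) (f n (i + k + 1)) ≤
        ((j - i : ℕ) : ℝ) * (d / 2 ^ n) := by
      have h := Finset.sum_le_card_nsmul (Finset.range (j - i))
        (fun k => dist (f n (i + k)) (f n (i + k + 1))) (d / 2 ^ n)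
        (fun k hk => hstep n (i + k) (by simp only [Finset.mem_range] at hk; omega))
      simpa [Finset.card_range, nsmul_eq_mul] using h
    calc dist (f n i) (f n j) ≤ _ := hkey
      _ ≤ ((j - i : ℕ) : ℝ) * (d / 2 ^ n) := hsum
      _ = d * ((j - i : ℕ) : ℝ) / 2 ^ n := by ring
  set u : ℝ → ℕ → X := fun t n => f n ⌊t * 2 ^ n⌋₊ with hu
  have hfle : ∀ t : ℝ, t ≤ 1 → ∀ n : ℕ, ⌊t * 2 ^ n⌋₊ ≤ 2 ^ n := by
    intro t ht n
    have h2p : (0:ℝ) < 2 ^ n := by positivity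
    have h1 : t * 2 ^ n ≤ ((2 ^ n : ℕ) : ℝ) := by push_cast; nlinarith
    calc ⌊t * 2 ^ n⌋₊ ≤ ⌊((2 ^ n : ℕ) : ℝ)⌋₊ := Nat.floor_mono h1
      _ = 2 ^ n := Nat.floor_natCast _
  have hud : ∀ t : ℝ, 0 ≤ t → t ≤ 1 → ∀ n,
      dist (u t n) (u t (n+1)) ≤ (d/2) * (1/2) ^ n := by
    intro t ht0 ht1 n
    set a := ⌊t * 2 ^ n⌋₊ with ha
    set bb := ⌊t * 2 ^ (n+1)⌋₊ with hbb
    have hfl1 : (a : ℝ) ≤ t * 2 ^ n := Nat.floor_le (by positivity)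
    have hfl2 : t * 2 ^ n < a + 1 := Nat.lt_floor_add_one _
    have hpow : (2:ℝ) ^ (n+1) = 2 * 2 ^ n := by ring
    have hb1 : 2 * a ≤ bb := by
      apply Nat.le_floor
      push_cast
      rw [hpow]
      nlinarith
    have hb2 : bb ≤ 2 * a + 1 := by
      have h1 : (bb : ℝ) ≤ t * 2 ^ (n+1) := Nat.floor_le (by positivity)
      have h2 : t * 2 ^ (n+1) < 2 * a + 2 := by rw [hpow]; nlinarith
      have h3 : (bb : ℝ) < ((2 * a + 2 : ℕ) : ℝ) := by push_cast; linarith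
      have h4 : bb < 2 * a + 2 := by exact_mod_cast h3
      omega
    have hb2n : bb ≤ 2 ^ (n+1) := hfle t ht1 (n+1)
    have e0 : f (n+1) (2 * a) = f n a := by
      rw [hfsucc]
      have h5 : (2 * a) % 2 = 0 := by omega
      have h6 : (2 * a) / 2 = a := by omega
      rw [if_pos h5, h6]
    have hcast : ((bb - 2 * a : ℕ) : ℝ) ≤ 1 := by
      exact_mod_cast (by omega : bb - 2 * a ≤ 1)
    have h2p : (0:ℝ) < 2 ^ (n+1) := by positivity
    calc dist (u t n) (u t (n+1)) = dist (f (n+1) (2 * a)) (f (n+1) bb) := by rw [e0]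
      _ ≤ d * ((bb - 2 * a : ℕ) : ℝ) / 2 ^ (n+1) := hchain (n+1) (2*a) bb hb1 hb2n
      _ ≤ d * 1 / 2 ^ (n+1) := by
          gcongr
      _ = (d/2) * (1/2) ^ n := by
          rw [mul_one, pow_succ, one_div, inv_pow, div_eq_mul_inv, div_eq_mul_inv, mul_inv]
          ring
  have hγex : ∀ t : ℝ, 0 ≤ t → t ≤ 1 →
      ∃ p : X, Filter.Tendsto (u t) Filter.atTop (nhds p) := by
    intro t ht0 ht1
    exact cauchySeq_tendsto_of_complete
      (cauchySeq_of_le_geometric (1/2 : ℝ) (d/2) (by norm_num) (hud t ht0 ht1))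
  set γ : ℝ → X := fun t => if h : ∃ p : X, Filter.Tendsto (u t) Filter.atTop (nhds p)
    then h.choose else x with hγ
  have hγt : ∀ t : ℝ, 0 ≤ t → t ≤ 1 → Filter.Tendsto (u t) Filter.atTop (nhds (γ t)) := by
    intro t ht0 ht1
    have h := hγex t ht0 ht1
    simp only [hγ, dif_pos h]
    exact h.choose_spec
  have hγ0 : γ 0 = x := by
    have h1 : Filter.Tendsto (u 0) Filter.atTop (nhds x) := by
      have he : u 0 = fun _ => x := by
        funext n
        show f n ⌊(0:ℝ) * 2 ^ n⌋₊ = x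
        norm_num [hfx]
      rw [he]; exact tendsto_const_nhds
    exact tendsto_nhds_unique (hγt 0 le_rfl zero_le_one) h1
  have hγ1 : γ 1 = y := by
    have h1 : Filter.Tendsto (u 1) Filter.atTop (nhds y) := by
      have he : u 1 = fun _ => y := by
        funext n
        show f n ⌊(1:ℝ) * 2 ^ n⌋₊ = y
        have h : (1:ℝ) * 2 ^ n = ((2 ^ n : ℕ) : ℝ) := by push_cast; ring
        rw [h, Nat.floor_natCast]
        exact hfy n
      rw [he]; exact tendsto_const_nhds
    exact tendsto_nhds_unique (hγt 1 zero_le_one le_rfl) h1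
  have hlip : ∀ s t : ℝ, 0 ≤ s → s ≤ t → t ≤ 1 → dist (γ s) (γ t) ≤ d * (t - s) := by
    intro s t hs0 hst ht1
    have hbnd : ∀ n, dist (u s n) (u t n) ≤ d * (t - s) + d / 2 ^ n := by
      intro n
      have h2p : (0:ℝ) < 2 ^ n := by positivity
      have hmono : ⌊s * 2 ^ n⌋₊ ≤ ⌊t * 2 ^ n⌋₊ :=
        Nat.floor_mono (mul_le_mul_of_nonneg_right hst h2p.le)
      have h1 := hchain n _ _ hmono (hfle t ht1 n)
      have hfls : (s * 2 ^ n) - 1 < (⌊s * 2 ^ n⌋₊ : ℝ) := by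
        have := Nat.lt_floor_add_one (s * 2 ^ n); linarith
      have hflt : (⌊t * 2 ^ n⌋₊ : ℝ) ≤ t * 2 ^ n :=
        Nat.floor_le (mul_nonneg (hs0.trans hst) h2p.le)
      have hcast : ((⌊t * 2 ^ n⌋₊ - ⌊s * 2 ^ n⌋₊ : ℕ) : ℝ)
          = (⌊t * 2 ^ n⌋₊ : ℝ) - (⌊s * 2 ^ n⌋₊ : ℝ) := by
        exact_mod_cast Nat.cast_sub hmono
      have h2 : ((⌊t * 2 ^ n⌋₊ - ⌊s * 2 ^ n⌋₊ : ℕ) : ℝ) ≤ t * 2 ^ n - s * 2 ^ n + 1 := by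
        rw [hcast]; linarith
      calc dist (u s n) (u t n) ≤ d * _ / 2 ^ n := h1
        _ ≤ d * (t * 2 ^ n - s * 2 ^ n + 1) / 2 ^ n := by
            gcongr
        _ = d * (t - s) + d / 2 ^ n := by field_simp
    have hl : Filter.Tendsto (fun n => dist (u s n) (u t n)) Filter.atTop
        (nhds (dist (γ s) (γ t))) :=
      (hγt s hs0 (hst.trans ht1)).dist (hγt t (hs0.trans hst) ht1)
    have hr : Filter.Tendsto (fun n : ℕ => d * (t - s) + d / 2 ^ n) Filter.atTop
        (nhds (d * (t - s))) := by
      have hp : Filter.Tendsto (fun n : ℕ => (1/2 : ℝ) ^ n) Filter.atTop (nhds 0) :=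
        tendsto_pow_atTop_nhds_zero_of_lt_one (by norm_num) (by norm_num)
      have h2 : Filter.Tendsto (fun n : ℕ => d / 2 ^ n) Filter.atTop (nhds 0) := by
        have := hp.const_mul d
        simpa [div_pow, mul_one_div, div_eq_mul_inv] using this
      simpa using tendsto_const_nhds.add h2
    exact le_of_tendsto_of_tendsto' hl hr hbnd
  have key : ∀ s t : ℝ, s ∈ Set.Icc (0:ℝ) 1 → t ∈ Set.Icc (0:ℝ) 1 → s ≤ t →
      dist (γ s) (γ t) = d * (t - s) := by
    intro s t hs ht hst
    have h3 := hlip s t hs.1 hst ht.2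
    have h1 : dist x (γ s) ≤ d * s := by
      have h := hlip 0 s le_rfl hs.1 hs.2
      rw [hγ0] at h; simpa using h
    have h2 : dist (γ t) y ≤ d * (1 - t) := by
      have h := hlip t 1 ht.1 ht.2 le_rfl
      rw [hγ1] at h; exact h
    have htri : d ≤ dist x (γ s) + (dist (γ s) (γ t) + dist (γ t) y) :=
      calc d = dist x y := hd
        _ ≤ dist x (γ s) + dist (γ s) y := dist_triangle _ _ _
        _ ≤ dist x (γ s) + (dist (γ s) (γ t) + dist (γ t) y) := by
            linarith [dist_triangle (γ s) (γ t) y]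
    have hexp : d * (t - s) = d - d * s - d * (1 - t) := by ring
    exact le_antisymm h3 (by linarith)
  refine ⟨γ, hγ0, hγ1, ?_⟩
  intro s hs t ht
  rcases le_total s t with hst | hst
  · rw [key s t hs ht hst, abs_sub_comm, abs_of_nonneg (by linarith)]
  · rw [dist_comm, key t s ht hs hst, abs_of_nonneg (by linarith)]
end

section
/- (Alexandrov's Lemma) Let p,x,y,z be distinct points in a geodesic metric space with z on a geodesic segment [x,y]. Then the quantities ∠̄_x([x,p],[x,y]) − ∠̄_x([x,p],[x,z]) and ∠̄_z([z,p],[z,x]) + ∠̄_z([z,p],[z,y]) − π have the same sign. -/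
open Set

private lemma sign_congr {a b : ℝ} (h1 : 0 < a ↔ 0 < b) (h2 : a < 0 ↔ b < 0) :
    Real.sign a = Real.sign b := by
  rcases lt_trichotomy a 0 with h | h | h
  · rw [Real.sign_of_neg h, Real.sign_of_neg (h2.mp h)]
  · have hb : b = 0 := by
      by_contra hb
      rcases lt_or_gt_of_ne hb with hb | hb
      · exact absurd (h2.mpr hb) (by simp [h])
      · exact absurd (h1.mpr hb) (by simp [h])
    rw [h, hb]
  · rw [Real.sign_of_pos h, Real.sign_of_pos (h1.mp h)]

private lemma sign_div_pos {a d : ℝ} (hd : 0 < d) :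
    Real.sign (a / d) = Real.sign a := by
  refine sign_congr ?_ ?_
  · constructor
    · intro h
      rcases div_pos_iff.mp h with ⟨h', _⟩ | ⟨_, h'⟩
      · exact h'
      · linarith
    · intro h; positivity
  · constructor
    · intro h
      by_contra hb
      exact absurd h (not_lt.mpr (div_nonneg (not_lt.mp hb) hd.le))
    · intro h; exact div_neg_of_neg_of_pos h hd

private lemma sign_arccos_sub {t1 t2 : ℝ} (h1 : t1 ∈ Icc (-1:ℝ) 1) (h2 : t2 ∈ Icc (-1:ℝ) 1) :
    Real.sign (Real.arccos t1 - Real.arccos t2) = Real.sign (t2 - t1) := by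
  refine sign_congr ?_ ?_
  · constructor
    · intro h
      by_contra hb
      rcases (not_lt.mp hb).lt_or_eq with hlt | heq
      · have := Real.strictAntiOn_arccos h2 h1 (by linarith)
        linarith
      · rw [show t1 = t2 by linarith] at h; linarith
    · intro h
      have := Real.strictAntiOn_arccos h1 h2 (by linarith)
      linarith
  · constructor
    · intro h
      by_contra hb
      rcases (not_lt.mp hb).lt_or_eq with hlt | heq
      · have := Real.strictAntiOn_arccos h1 h2 (by linarith)
        linarith
      · rw [show t2 = t1 by linarith] at h; linarith
    · intro h
      have := Real.strictAntiOn_arccos h2 h1 (by linarith)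
      linarith

private lemma ratio_mem {a b c : ℝ} (ha : 0 < a) (hb : 0 < b)
    (h1 : c ≤ a + b) (h2 : a ≤ b + c) (h3 : b ≤ a + c) :
    (a ^ 2 + b ^ 2 - c ^ 2) / (2 * a * b) ∈ Icc (-1:ℝ) 1 := by
  have hab : 0 < 2 * a * b := by positivity
  constructor
  · rw [le_div_iff₀ hab]; nlinarith
  · rw [div_le_one hab]; nlinarith

/-- The Euclidean comparison angle at `a` between `b` and `c`. -/
noncomputable def compAngle {X : Type*} [MetricSpace X] (a b c : X) : ℝ :=
  Real.arccos ((dist a b ^ 2 + dist a c ^ 2 - dist b c ^ 2) / (2 * dist a b * dist a c))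

/-- (Alexandrov's Lemma) For distinct points `p, x, y, z` of a geodesic metric space with
`z` on a geodesic segment from `x` to `y`, the quantities
`∠̄_x(p,y) − ∠̄_x(p,z)` and `∠̄_z(p,x) + ∠̄_z(p,y) − π` have the same sign. -/
theorem alexandrov_lemma {X : Type*} [MetricSpace X]
    (hgeo : ∀ a b : X, ∃ γ : ℝ → X, γ 0 = a ∧ γ 1 = b ∧
      ∀ s ∈ Set.Icc (0:ℝ) 1, ∀ t ∈ Set.Icc (0:ℝ) 1,
        dist (γ s) (γ t) = dist a b * |s - t|)
    (p x y z : X)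
    (hpx : p ≠ x) (hpy : p ≠ y) (hpz : p ≠ z)
    (hxy : x ≠ y) (hxz : x ≠ z) (hyz : y ≠ z)
    (hz : dist x z + dist z y = dist x y) :
    Real.sign (compAngle x p y - compAngle x p z) =
      Real.sign (compAngle z p x + compAngle z p y - Real.pi) := by
  set u := dist x p with hu
  set v := dist z p with hv
  set w := dist y p with hw
  set α := dist x z with hα
  set β := dist z y with hβ
  have hu0 : 0 < u := dist_pos.mpr (Ne.symm hpx)
  have hv0 : 0 < v := dist_pos.mpr (Ne.symm hpz)
  have hw0 : 0 < w := dist_pos.mpr (Ne.symm hpy)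
  have hα0 : 0 < α := dist_pos.mpr hxz
  have hβ0 : 0 < β := dist_pos.mpr (Ne.symm hyz)
  -- triangle inequalities
  have T1 : v ≤ α + u := by
    rw [hv, hα, hu]; rw [dist_comm z p]
    calc dist p z ≤ dist p x + dist x z := dist_triangle _ _ _
    _ = dist x z + dist x p := by rw [dist_comm p x]; ring
  have T2 : u ≤ α + v := by
    rw [hu, hα, hv]; rw [dist_comm x p]
    calc dist p x ≤ dist p z + dist z x := dist_triangle _ _ _
    _ = dist x z + dist z p := by rw [dist_comm p z, dist_comm z x]; ring
  have T3 : α ≤ u + v := by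
    rw [hu, hα, hv]
    calc dist x z ≤ dist x p + dist p z := dist_triangle _ _ _
    _ = dist x p + dist z p := by rw [dist_comm p z]
  have T4 : w ≤ β + v := by
    rw [hw, hβ, hv]; rw [dist_comm y p]
    calc dist p y ≤ dist p z + dist z y := dist_triangle _ _ _
    _ = dist z y + dist z p := by rw [dist_comm p z]; ring
  have T5 : v ≤ β + w := by
    rw [hv, hβ, hw]; rw [dist_comm z p]
    calc dist p z ≤ dist p y + dist y z := dist_triangle _ _ _
    _ = dist z y + dist y p := by rw [dist_comm p y, dist_comm y z]; ring
  have T6 : β ≤ v + w := by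
    rw [hv, hβ, hw]
    calc dist z y ≤ dist z p + dist p y := dist_triangle _ _ _
    _ = dist z p + dist y p := by rw [dist_comm p y]
  have T7 : w ≤ (α + β) + u := by
    rw [hw, hu, hz, dist_comm y p]
    calc dist p y ≤ dist p x + dist x y := dist_triangle _ _ _
    _ = dist x y + dist x p := by rw [dist_comm p x]; ring
  have T8 : u ≤ (α + β) + w := by
    rw [hu]
    calc dist x p ≤ dist x y + dist y p := dist_triangle _ _ _
    _ = (α + β) + w := by rw [← hz, hw]
  have T9 : α + β ≤ u + w := by
    rw [hz, hu, hw]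
    calc dist x y ≤ dist x p + dist p y := dist_triangle _ _ _
    _ = dist x p + dist y p := by rw [dist_comm p y]
  -- the four ratios
  have hxy' : dist x y = α + β := hz.symm
  have e1 : compAngle x p y =
      Real.arccos ((u ^ 2 + (α + β) ^ 2 - w ^ 2) / (2 * u * (α + β))) := by
    unfold compAngle
    rw [← hu, hxy', dist_comm p y, ← hw]
  have e2 : compAngle x p z =
      Real.arccos ((u ^ 2 + α ^ 2 - v ^ 2) / (2 * u * α)) := by
    unfold compAngle
    rw [← hu, ← hα, dist_comm p z, ← hv]
  have e3 : compAngle z p x =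
      Real.arccos ((v ^ 2 + α ^ 2 - u ^ 2) / (2 * v * α)) := by
    unfold compAngle
    rw [← hv, dist_comm z x, ← hα, dist_comm p x, ← hu]
  have e4 : compAngle z p y =
      Real.arccos ((v ^ 2 + β ^ 2 - w ^ 2) / (2 * v * β)) := by
    unfold compAngle
    rw [← hv, ← hβ, dist_comm p y, ← hw]
  set t1 := (u ^ 2 + (α + β) ^ 2 - w ^ 2) / (2 * u * (α + β)) with ht1
  set t2 := (u ^ 2 + α ^ 2 - v ^ 2) / (2 * u * α) with ht2
  set s1 := (v ^ 2 + α ^ 2 - u ^ 2) / (2 * v * α) with hs1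
  set s2 := (v ^ 2 + β ^ 2 - w ^ 2) / (2 * v * β) with hs2
  have ht1m : t1 ∈ Icc (-1:ℝ) 1 :=
    ratio_mem hu0 (by linarith) (by linarith) (by linarith) (by linarith)
  have ht2m : t2 ∈ Icc (-1:ℝ) 1 := ratio_mem hu0 hα0 (by linarith) (by linarith) (by linarith)
  have hs1m : s1 ∈ Icc (-1:ℝ) 1 := ratio_mem hv0 hα0 (by linarith) (by linarith) (by linarith)
  have hs2m : s2 ∈ Icc (-1:ℝ) 1 := ratio_mem hv0 hβ0 (by linarith) (by linarith) (by linarith)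
  have hs1m' : -s1 ∈ Icc (-1:ℝ) 1 := ⟨by linarith [hs1m.2], by linarith [hs1m.1]⟩
  set S := (α + β) * v ^ 2 + α * β * (α + β) - β * u ^ 2 - α * w ^ 2 with hS
  have key1 : t2 - t1 = -S / (2 * u * α * (α + β)) := by
    rw [ht1, ht2, hS]
    field_simp
    ring
  have key2 : -s1 - s2 = -S / (2 * v * α * β) := by
    rw [hs1, hs2, hS]
    field_simp
    ring
  have L : Real.sign (Real.arccos t1 - Real.arccos t2) = Real.sign (-S) := by
    rw [sign_arccos_sub ht1m ht2m, key1, sign_div_pos (by positivity)]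
  have R : Real.sign (Real.arccos s1 + Real.arccos s2 - Real.pi) = Real.sign (-S) := by
    have harc : Real.arccos s1 + Real.arccos s2 - Real.pi
        = -(Real.arccos (-s1) - Real.arccos s2) := by
      rw [Real.arccos_neg]; ring
    rw [harc, Real.sign_neg, sign_arccos_sub hs1m' hs2m,
      show s2 - -s1 = -(-s1 - s2) by ring, Real.sign_neg, neg_neg, key2,
      sign_div_pos (by positivity)]
  rw [e1, e2, e3, e4, L, R]
end

section
/- In a geodesically convex neighborhood U of a metric space, the following are equivalent: (1) every geodesic triangle Δ(a,b,c) in U satisfies d(m,m') ≤ d(b,c)/2 where m,m' are midpoints of [a,b],[a,c]; (2) every pair of geodesics γ₁,γ₂:[0,1]→U parametrized proportionally to arc length satisfies d(γ₁(t),γ₂(t)) ≤ (1−t)d(γ₁(0),γ₂(0)) + t·d(γ₁(1),γ₂(1)) for all t∈[0,1]. -/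
open Set

/-- A geodesic `γ : [0,1] → X` parametrized proportionally to arc length and lying in `U`. -/
def IsGeodesicIn {X : Type*} [MetricSpace X] (U : Set X) (γ : ℝ → X) : Prop :=
  (∀ t ∈ Set.Icc (0:ℝ) 1, γ t ∈ U) ∧
  ∃ lam : ℝ, ∀ s ∈ Set.Icc (0:ℝ) 1, ∀ t ∈ Set.Icc (0:ℝ) 1,
    dist (γ s) (γ t) = lam * |s - t|

/-- Reversal of a geodesic is a geodesic. -/
lemma IsGeodesicIn.reverse {X : Type*} [MetricSpace X] {U : Set X} {γ : ℝ → X}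
    (h : IsGeodesicIn U γ) : IsGeodesicIn U (fun t => γ (1 - t)) := by
  obtain ⟨hmem, lam, hlam⟩ := h
  refine ⟨fun t ht => hmem (1 - t) ⟨by linarith [ht.2], by linarith [ht.1]⟩, lam, ?_⟩
  intro s hs t ht
  rw [hlam (1 - s) ⟨by linarith [hs.2], by linarith [hs.1]⟩
      (1 - t) ⟨by linarith [ht.2], by linarith [ht.1]⟩]
  congr 1
  rw [show (1 - s) - (1 - t) = -(s - t) by ring, abs_neg]

/-- Affine reparametrization of a geodesic over a subinterval is a geodesic. -/
lemma IsGeodesicIn.reparam {X : Type*} [MetricSpace X] {U : Set X} {γ : ℝ → X}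
    (h : IsGeodesicIn U γ) {s t : ℝ} (hs : s ∈ Set.Icc (0:ℝ) 1) (ht : t ∈ Set.Icc (0:ℝ) 1) :
    IsGeodesicIn U (fun u => γ (s + u * (t - s))) := by
  obtain ⟨hmem, lam, hlam⟩ := h
  have key : ∀ u ∈ Set.Icc (0:ℝ) 1, s + u * (t - s) ∈ Set.Icc (0:ℝ) 1 := by
    intro u hu
    constructor
    · nlinarith [hu.1, hu.2, hs.1, hs.2, ht.1, ht.2]
    · nlinarith [hu.1, hu.2, hs.1, hs.2, ht.1, ht.2]
  refine ⟨fun u hu => hmem _ (key u hu), lam * |t - s|, ?_⟩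
  intro u hu v hv
  rw [hlam _ (key u hu) _ (key v hv)]
  rw [show s + u * (t - s) - (s + v * (t - s)) = (u - v) * (t - s) by ring, abs_mul]
  ring

/-- Continuity of a geodesic on `[0,1]`. -/
lemma IsGeodesicIn.continuousOn {X : Type*} [MetricSpace X] {U : Set X} {γ : ℝ → X}
    (h : IsGeodesicIn U γ) : ContinuousOn γ (Set.Icc (0:ℝ) 1) := by
  obtain ⟨hmem, lam, hlam⟩ := h
  have hlip : LipschitzOnWith (Real.toNNReal lam) γ (Set.Icc (0:ℝ) 1) := by
    intro a ha b hb
    rw [edist_dist, edist_dist, hlam a ha b hb]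
    have h0 : (0:ℝ) ≤ lam := by
      rcases eq_or_ne a b with rfl | hab
      · have := hlam 0 ⟨le_refl _, zero_le_one⟩ 1 ⟨zero_le_one, le_refl _⟩
        simp at this
        have := dist_nonneg (x := γ 0) (y := γ 1)
        linarith [this, hlam 0 ⟨le_refl _, zero_le_one⟩ 1 ⟨zero_le_one, le_refl _⟩]
      · have habs : 0 < |a - b| := abs_pos.mpr (sub_ne_zero.mpr hab)
        have := dist_nonneg (x := γ a) (y := γ b)
        rw [hlam a ha b hb] at this
        nlinarith
    rw [← Real.dist_eq]
    calc ENNReal.ofReal (lam * dist a b) ≤ ENNReal.ofReal (lam * dist a b) := le_refl _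
      _ = ENNReal.ofReal lam * ENNReal.ofReal (dist a b) := by
          rw [ENNReal.ofReal_mul h0]
      _ = (Real.toNNReal lam : ENNReal) * ENNReal.ofReal (dist a b) := by
          rw [ENNReal.ofReal]
  exact hlip.continuousOn

/-- The key two-endpoint midpoint inequality, derived from the shared-start
midpoint hypothesis using an auxiliary geodesic. -/
lemma two_endpoint_midpoint {X : Type*} [MetricSpace X] {U : Set X}
    (hconv : ∀ x ∈ U, ∀ y ∈ U, ∃ γ : ℝ → X, γ 0 = x ∧ γ 1 = y ∧ IsGeodesicIn U γ)
    (H : ∀ γ₁ γ₂ : ℝ → X, IsGeodesicIn U γ₁ → IsGeodesicIn U γ₂ → γ₁ 0 = γ₂ 0 →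
      dist (γ₁ (1/2)) (γ₂ (1/2)) ≤ dist (γ₁ 1) (γ₂ 1) / 2)
    (σ₁ σ₂ : ℝ → X) (h₁ : IsGeodesicIn U σ₁) (h₂ : IsGeodesicIn U σ₂) :
    dist (σ₁ (1/2)) (σ₂ (1/2)) ≤ (dist (σ₁ 0) (σ₂ 0) + dist (σ₁ 1) (σ₂ 1)) / 2 := by
  obtain ⟨σ, hσ0, hσ1, hσ⟩ :=
    hconv (σ₁ 0) (h₁.1 0 ⟨le_refl _, zero_le_one⟩) (σ₂ 1) (h₂.1 1 ⟨zero_le_one, le_refl _⟩)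
  have step1 : dist (σ₁ (1/2)) (σ (1/2)) ≤ dist (σ₁ 1) (σ₂ 1) / 2 := by
    have := H σ₁ σ h₁ hσ (by rw [hσ0])
    rwa [hσ1] at this
  have step2 : dist (σ (1/2)) (σ₂ (1/2)) ≤ dist (σ₁ 0) (σ₂ 0) / 2 := by
    have := H (fun t => σ₂ (1 - t)) (fun t => σ (1 - t)) h₂.reverse hσ.reverse
      (by simp [hσ1])
    simp only [show (1:ℝ) - 1/2 = 1/2 by norm_num, sub_self] at this
    rw [hσ0] at this
    calc dist (σ (1/2)) (σ₂ (1/2)) = dist (σ₂ (1/2)) (σ (1/2)) := dist_comm _ _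
      _ ≤ dist (σ₂ 0) (σ₁ 0) / 2 := this
      _ = dist (σ₁ 0) (σ₂ 0) / 2 := by rw [dist_comm]
  calc dist (σ₁ (1/2)) (σ₂ (1/2)) ≤ dist (σ₁ (1/2)) (σ (1/2)) + dist (σ (1/2)) (σ₂ (1/2)) :=
        dist_triangle _ _ _
    _ ≤ dist (σ₁ 1) (σ₂ 1) / 2 + dist (σ₁ 0) (σ₂ 0) / 2 := add_le_add step1 step2
    _ = (dist (σ₁ 0) (σ₂ 0) + dist (σ₁ 1) (σ₂ 1)) / 2 := by ring

/-- In a geodesically convex neighborhood `U`, the midpoint condition for geodesic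
triangles is equivalent to convexity of the metric along geodesics in `U`. -/
theorem busemann_midpoint_iff_convex {X : Type*} [MetricSpace X] (U : Set X)
    (hconv : ∀ x ∈ U, ∀ y ∈ U, ∃ γ : ℝ → X, γ 0 = x ∧ γ 1 = y ∧ IsGeodesicIn U γ) :
    (∀ γ₁ γ₂ : ℝ → X, IsGeodesicIn U γ₁ → IsGeodesicIn U γ₂ → γ₁ 0 = γ₂ 0 →
      dist (γ₁ (1/2)) (γ₂ (1/2)) ≤ dist (γ₁ 1) (γ₂ 1) / 2) ↔
    (∀ γ₁ γ₂ : ℝ → X, IsGeodesicIn U γ₁ → IsGeodesicIn U γ₂ →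
      ∀ t ∈ Set.Icc (0:ℝ) 1,
        dist (γ₁ t) (γ₂ t) ≤ (1 - t) * dist (γ₁ 0) (γ₂ 0) + t * dist (γ₁ 1) (γ₂ 1)) := by
  constructor
  · intro H γ₁ γ₂ h₁ h₂
    -- midpoint inequality for the distance function along the two geodesics
    set g : ℝ → ℝ := fun t => dist (γ₁ t) (γ₂ t) with hg
    have gmid : ∀ s ∈ Set.Icc (0:ℝ) 1, ∀ t ∈ Set.Icc (0:ℝ) 1,
        g ((s + t) / 2) ≤ (g s + g t) / 2 := by
      intro s hs t ht
      have := two_endpoint_midpoint hconv H _ _ (h₁.reparam hs ht) (h₂.reparam hs ht)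
      simpa [hg, show s + (2:ℝ)⁻¹ * (t - s) = (s + t) / 2 by ring,
        show s + (0:ℝ) * (t - s) = s by ring, show s + (1:ℝ) * (t - s) = t by ring]
        using this
    -- the difference with the linear interpolation
    set h : ℝ → ℝ := fun t => g t - ((1 - t) * g 0 + t * g 1) with hh
    have hcont : ContinuousOn h (Set.Icc (0:ℝ) 1) := by
      have hgc : ContinuousOn g (Set.Icc (0:ℝ) 1) :=
        continuous_dist.comp_continuousOn (h₁.continuousOn.prodMk h₂.continuousOn)
      exact hgc.sub (((continuousOn_const.sub continuousOn_id).mul continuousOn_const).add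
        (continuousOn_id.mul continuousOn_const))
    have hmid : ∀ s ∈ Set.Icc (0:ℝ) 1, ∀ t ∈ Set.Icc (0:ℝ) 1,
        h ((s + t) / 2) ≤ (h s + h t) / 2 := by
      intro s hs t ht
      have := gmid s hs t ht
      simp only [hh]
      nlinarith [this]
    have h0 : h 0 = 0 := by simp [hh]
    have h1 : h 1 = 0 := by simp [hh]
    -- show `h ≤ 0` on `[0,1]` via the max argument
    have hle : ∀ t ∈ Set.Icc (0:ℝ) 1, h t ≤ 0 := by
      by_contra hcon
      push_neg at hcon
      obtain ⟨t₀, ht₀, ht₀pos⟩ := hcon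
      -- the max of h on [0,1]
      obtain ⟨M, hMmem, hMmax⟩ := (isCompact_Icc (a := (0:ℝ)) (b := 1)).exists_isMaxOn
        (Set.nonempty_Icc.mpr zero_le_one) hcont
      have hMpos : 0 < h M := lt_of_lt_of_le ht₀pos (hMmax ht₀)
      set A : Set ℝ := {t ∈ Set.Icc (0:ℝ) 1 | h t = h M} with hA
      have hAne : A.Nonempty := ⟨M, hMmem, rfl⟩
      have hAsub : A ⊆ Set.Icc (0:ℝ) 1 := fun t ht => ht.1
      have hAcomp : IsCompact A := by
        have hclosed : IsClosed A := by
          have : A = Set.Icc (0:ℝ) 1 ∩ h ⁻¹' {h M} := by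
            ext t; simp [hA, Set.mem_sep_iff, and_comm]
          rw [this]
          exact ContinuousOn.preimage_isClosed_of_isClosed hcont isClosed_Icc
            isClosed_singleton
        exact (isCompact_Icc).of_isClosed_subset hclosed hAsub
      obtain ⟨a, haA, hamin⟩ := hAcomp.exists_isMinOn hAne continuousOn_id
      have ha01 : a ∈ Set.Icc (0:ℝ) 1 := haA.1
      have haM : h a = h M := haA.2
      have ha0 : 0 < a := by
        rcases lt_or_eq_of_le ha01.1 with h' | h'
        · exact h'
        · exfalso; rw [← h'] at haM; rw [h0] at haM; linarith
      have ha1 : a < 1 := by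
        rcases lt_or_eq_of_le ha01.2 with h' | h'
        · exact h'
        · exfalso; rw [h'] at haM; rw [h1] at haM; linarith
      set ε : ℝ := min a (1 - a) with hε
      have hεpos : 0 < ε := lt_min ha0 (by linarith)
      have hεa : ε ≤ a := min_le_left _ _
      have hεa' : ε ≤ 1 - a := min_le_right _ _
      have hmem1 : a - ε ∈ Set.Icc (0:ℝ) 1 := ⟨by linarith, by linarith [ha01.2]⟩
      have hmem2 : a + ε ∈ Set.Icc (0:ℝ) 1 := ⟨by linarith [ha01.1], by linarith⟩
      have hlt1 : h (a - ε) < h M := by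
        have hle1 : h (a - ε) ≤ h M := hMmax hmem1
        rcases lt_or_eq_of_le hle1 with h' | h'
        · exact h'
        · exfalso
          have hAm : a - ε ∈ A := ⟨hmem1, h'⟩
          have h2 : a ≤ a - ε := hamin hAm
          linarith
      have hle2 : h (a + ε) ≤ h M := hMmax hmem2
      have := hmid (a - ε) hmem1 (a + ε) hmem2
      rw [show (a - ε + (a + ε)) / 2 = a by ring] at this
      rw [haM] at this
      clear_value ε h g
      linarith
    intro t ht
    have := hle t ht
    simp only [hh, hg] at this
    linarith
  · intro H γ₁ γ₂ h₁ h₂ heq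
    have := H γ₁ γ₂ h₁ h₂ (1/2) ⟨by norm_num, by norm_num⟩
    rw [heq] at this
    simp at this
    linarith [this]
end

section
/- (Flat Strip Theorem) Let (X,d) be a CAT(0) space and γ₁,γ₂:ℝ→X two geodesic lines that are asymptotic, i.e., there is K with d(γ₁(t),γ₂(t)) ≤ K for all t∈ℝ. Then the convex hull of γ₁(ℝ) ∪ γ₂(ℝ) is isometric to a flat strip ℝ×[0,D] ⊆ E² for some D ≥ 0. -/
open Set

/-- `γ : [0,1] → X` is a geodesic segment from `x` to `y`, parametrized proportionally
to arc length. -/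
def IsGeodesicSeg {X : Type*} [MetricSpace X] (γ : ℝ → X) (x y : X) : Prop :=
  γ 0 = x ∧ γ 1 = y ∧
  ∀ s ∈ Set.Icc (0:ℝ) 1, ∀ t ∈ Set.Icc (0:ℝ) 1, dist (γ s) (γ t) = dist x y * |s - t|

/-- The Euclidean plane. -/
abbrev E2 := EuclideanSpace ℝ (Fin 2)

/-- The comparison point at parameter `t` on the Euclidean segment from `x'` to `y'`. -/
noncomputable def comparisonPt (x' y' : E2) (t : ℝ) : E2 := (1 - t) • x' + t • y'

/-- `X` is a CAT(0) space: it is geodesic, and every geodesic triangle satisfies the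
CAT(0) comparison inequality with respect to any Euclidean comparison triangle. -/
def CAT0 (X : Type*) [MetricSpace X] : Prop :=
  (∀ x y : X, ∃ γ : ℝ → X, IsGeodesicSeg γ x y) ∧
  ∀ (x y z : X) (γ₁ γ₂ γ₃ : ℝ → X),
    IsGeodesicSeg γ₁ x y → IsGeodesicSeg γ₂ y z → IsGeodesicSeg γ₃ x z →
    ∀ x' y' z' : E2,
      dist x' y' = dist x y → dist y' z' = dist y z → dist x' z' = dist x z →
      ∀ s ∈ Set.Icc (0:ℝ) 1, ∀ t ∈ Set.Icc (0:ℝ) 1,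
        dist (γ₁ s) (γ₁ t) ≤ dist (comparisonPt x' y' s) (comparisonPt x' y' t) ∧
        dist (γ₂ s) (γ₂ t) ≤ dist (comparisonPt y' z' s) (comparisonPt y' z' t) ∧
        dist (γ₃ s) (γ₃ t) ≤ dist (comparisonPt x' z' s) (comparisonPt x' z' t) ∧
        dist (γ₁ s) (γ₂ t) ≤ dist (comparisonPt x' y' s) (comparisonPt y' z' t) ∧
        dist (γ₁ s) (γ₃ t) ≤ dist (comparisonPt x' y' s) (comparisonPt x' z' t) ∧
        dist (γ₂ s) (γ₃ t) ≤ dist (comparisonPt y' z' s) (comparisonPt x' z' t)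

/-- `C` is geodesically convex. -/
def GeodConvex {X : Type*} [MetricSpace X] (C : Set X) : Prop :=
  ∀ x ∈ C, ∀ y ∈ C, ∃ γ : ℝ → X, IsGeodesicSeg γ x y ∧ ∀ t ∈ Set.Icc (0:ℝ) 1, γ t ∈ C

/-- The (closed) geodesically convex hull of `A`: the intersection of all closed
geodesically convex subsets containing `A`. -/
def geodConvexHull {X : Type*} [MetricSpace X] (A : Set X) : Set X :=
  ⋂₀ {C : Set X | IsClosed C ∧ GeodConvex C ∧ A ⊆ C}

/- ### Euclidean helpers -/

lemma e2_dist_sq (x y : E2) : dist x y ^ 2 = (x 0 - y 0)^2 + (x 1 - y 1)^2 := by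
  rw [EuclideanSpace.dist_eq, Real.sq_sqrt (by positivity)]
  simp [Fin.sum_univ_two, Real.dist_eq, sq_abs]

lemma e2_dist_eq (x y : E2) : dist x y = Real.sqrt ((x 0 - y 0)^2 + (x 1 - y 1)^2) := by
  rw [EuclideanSpace.dist_eq]; congr 1
  simp [Fin.sum_univ_two, Real.dist_eq, sq_abs]

lemma compPt_apply (x y : E2) (s : ℝ) (i : Fin 2) :
    comparisonPt x y s i = (1 - s) * x i + s * y i := by
  simp [comparisonPt]

lemma compPt_zero (x y : E2) : comparisonPt x y 0 = x := by
  simp [comparisonPt]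

lemma compPt_one (x y : E2) : comparisonPt x y 1 = y := by
  simp [comparisonPt]

lemma dist_eq_of_sq_eq {a b : ℝ} (ha : 0 ≤ a) (hb : 0 ≤ b) (hab : a^2 = b^2) : a = b := by
  nlinarith

lemma le_of_sq_le {a b : ℝ} (hb : 0 ≤ b) (hab : a^2 ≤ b^2) : a ≤ b := by
  nlinarith [sq_nonneg (a - b), sq_nonneg (a + b)]

/-- Existence of comparison triangles in the Euclidean plane. -/
lemma comparison_triangle_exists {X : Type*} [MetricSpace X] (x y z : X) :
    ∃ x' y' z' : E2, dist x' y' = dist x y ∧ dist y' z' = dist y z ∧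
      dist x' z' = dist x z := by
  set d1 := dist x y with hd1
  set d2 := dist y z with hd2
  set d3 := dist x z with hd3
  have h1 : 0 ≤ d1 := dist_nonneg
  have h2 : 0 ≤ d2 := dist_nonneg
  have h3 : 0 ≤ d3 := dist_nonneg
  have t1 : d3 ≤ d1 + d2 := dist_triangle x y z
  have t2 : d2 ≤ d1 + d3 := by
    have := dist_triangle y x z
    rwa [dist_comm y x] at this
  have t3 : d1 ≤ d3 + d2 := by
    have := dist_triangle x z y
    rwa [dist_comm z y] at this
  rcases eq_or_lt_of_le h1 with h0 | h0
  · -- d1 = 0, so x = y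
    have hxy : x = y := dist_eq_zero.mp (by rw [← hd1, ← h0])
    refine ⟨!₂[0,0], !₂[0,0], !₂[d2, 0], ?_, ?_, ?_⟩
    · rw [e2_dist_eq]; simp [← h0]
    · rw [e2_dist_eq]
      show Real.sqrt ((0 - d2)^2 + (0-0)^2) = d2
      rw [show (0 - d2)^2 + (0-(0:ℝ))^2 = d2^2 by ring, Real.sqrt_sq h2]
    · rw [e2_dist_eq]
      show Real.sqrt ((0 - d2)^2 + (0-0)^2) = d3
      have : d2 = d3 := by rw [hd2, hd3, hxy]
      rw [show (0 - d2)^2 + (0-(0:ℝ))^2 = d2^2 by ring, Real.sqrt_sq h2, this]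
  · set α := (d1^2 + d3^2 - d2^2) / (2*d1) with hα
    have hkey : d3^2 - α^2 ≥ 0 := by
      have hprod : (d1+d3+d2)*(d1+d3-d2)*(d2+d1-d3)*(d2-d1+d3) =
          (2*d1*d3)^2 - (d1^2+d3^2-d2^2)^2 := by ring
      have f1 : 0 ≤ d1+d3+d2 := by linarith
      have f2 : 0 ≤ d1+d3-d2 := by linarith
      have f3 : 0 ≤ d2+d1-d3 := by linarith
      have f4 : 0 ≤ d2-d1+d3 := by linarith
      have hp : 0 ≤ (2*d1*d3)^2 - (d1^2+d3^2-d2^2)^2 := by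
        rw [← hprod]; positivity
      have hd1pos : (0:ℝ) < 2*d1 := by linarith
      rw [hα]
      rw [div_pow, ge_iff_le, sub_nonneg, div_le_iff₀ (by positivity)]
      nlinarith
    set β := Real.sqrt (d3^2 - α^2) with hβ
    have hβsq : β^2 = d3^2 - α^2 := Real.sq_sqrt hkey
    refine ⟨!₂[0,0], !₂[d1, 0], !₂[α, β], ?_, ?_, ?_⟩
    · rw [e2_dist_eq]
      show Real.sqrt ((0 - d1)^2 + (0-0)^2) = d1
      rw [show (0 - d1)^2 + (0-(0:ℝ))^2 = d1^2 by ring, Real.sqrt_sq h1]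
    · rw [e2_dist_eq]
      show Real.sqrt ((d1 - α)^2 + (0-β)^2) = d2
      have : (d1 - α)^2 + (0-β)^2 = d2^2 := by
        have : α * (2*d1) = d1^2 + d3^2 - d2^2 := by
          rw [hα]; field_simp
        nlinarith [hβsq]
      rw [this, Real.sqrt_sq h2]
    · rw [e2_dist_eq]
      show Real.sqrt ((0 - α)^2 + (0-β)^2) = d3
      have : (0 - α)^2 + (0-β)^2 = d3^2 := by nlinarith [hβsq]
      rw [this, Real.sqrt_sq h3]

/- ### Convex bounded real functions are nonincreasing/constant -/

/-- A convex (in the weak sense below) function on ℝ bounded above is constant. -/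
lemma convex_bounded_const (f : ℝ → ℝ)
    (hconv : ∀ t₀ t₁ : ℝ, ∀ u ∈ Icc (0:ℝ) 1, f ((1-u)*t₀ + u*t₁) ≤ (1-u) * f t₀ + u * f t₁)
    (K : ℝ) (hbd : ∀ t, f t ≤ K) (a b : ℝ) : f a = f b := by
  -- first: f b ≤ f a + ε for all ε, in both orders
  have key : ∀ a b : ℝ, a ≠ b → ∀ ε : ℝ, 0 < ε → f b ≤ f a + ε := by
    intro a b hab ε hε
    set C := max (K - f a) 1 with hC
    have hC1 : (1:ℝ) ≤ C := le_max_right _ _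
    have hC0 : 0 < C := lt_of_lt_of_le one_pos hC1
    have hKC : K - f a ≤ C := le_max_left _ _
    -- choose T on the far side of b from a
    set ε' := min ε 1 with hε'
    have hε'0 : 0 < ε' := lt_min hε one_pos
    have hε'1 : ε' ≤ 1 := min_le_right _ _
    have hε'ε : ε' ≤ ε := min_le_left _ _
    set T := a + (b - a) * C / ε' with hT
    set u := ε' / C with hu
    have hu0 : 0 < u := div_pos hε'0 hC0
    have hu1 : u ≤ 1 := by
      rw [hu, div_le_one hC0]; exact le_trans hε'1 hC1
    have hb' : b = (1-u)*a + u*T := by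
      rw [hT, hu]; field_simp; ring
    have := hconv a T u ⟨le_of_lt hu0, hu1⟩
    rw [← hb'] at this
    have h2 : u * f T ≤ u * K := by
      apply mul_le_mul_of_nonneg_left (hbd T) (le_of_lt hu0)
    have h3 : f b ≤ f a + u * (K - f a) := by nlinarith
    have h4 : u * (K - f a) ≤ ε := by
      rw [hu]
      rcases le_or_gt (K - f a) 0 with hneg | hpos
      · have : ε' / C * (K - f a) ≤ 0 := mul_nonpos_of_nonneg_of_nonpos (le_of_lt hu0) hneg
        linarith
      · have : ε' / C * (K - f a) ≤ ε' / C * C := by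
          apply mul_le_mul_of_nonneg_left hKC (le_of_lt hu0)
        rw [div_mul_cancel₀ _ (ne_of_gt hC0)] at this
        linarith
    linarith
  rcases eq_or_ne a b with rfl | hab
  · rfl
  · have h1 : f b ≤ f a := by
      by_contra hc
      push_neg at hc
      have := key a b hab ((f b - f a)/2) (by linarith)
      linarith
    have h2 : f a ≤ f b := by
      by_contra hc
      push_neg at hc
      have := key b a (Ne.symm hab) ((f a - f b)/2) (by linarith)
      linarith
    linarith

/- ### CAT(0) helpers -/

section CAT0Helpers

variable {X : Type*} [MetricSpace X]

lemma isGeodesicSeg_const (x : X) : IsGeodesicSeg (fun _ => x) x x := by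
  refine ⟨rfl, rfl, ?_⟩
  intro s _ t _
  simp

/-- A chosen geodesic between two points. -/
noncomputable def geo (h : CAT0 X) (x y : X) : ℝ → X := (h.1 x y).choose

lemma geo_spec (h : CAT0 X) (x y : X) : IsGeodesicSeg (geo h x y) x y :=
  (h.1 x y).choose_spec

lemma IsGeodesicSeg.dist_left {γ : ℝ → X} {x y : X} (hg : IsGeodesicSeg γ x y)
    {s : ℝ} (hs : s ∈ Icc (0:ℝ) 1) : dist x (γ s) = dist x y * s := by
  have := hg.2.2 0 ⟨le_refl _, zero_le_one⟩ s hs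
  rw [hg.1] at this
  rw [this, abs_of_nonpos (by linarith [hs.1])]
  ring

lemma IsGeodesicSeg.dist_right {γ : ℝ → X} {x y : X} (hg : IsGeodesicSeg γ x y)
    {s : ℝ} (hs : s ∈ Icc (0:ℝ) 1) : dist (γ s) y = dist x y * (1 - s) := by
  have := hg.2.2 s hs 1 ⟨zero_le_one, le_refl _⟩
  rw [hg.2.1] at this
  rw [this, abs_of_nonpos (by linarith [hs.2])]
  ring

/-- Comparison: between side 1 (x→y) and side 3 (x→z). -/
lemma compare13 (h : CAT0 X) {x y z : X} {γa γc : ℝ → X}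
    (h1 : IsGeodesicSeg γa x y) (h3 : IsGeodesicSeg γc x z)
    {x' y' z' : E2} (e1 : dist x' y' = dist x y) (e2 : dist y' z' = dist y z)
    (e3 : dist x' z' = dist x z) {s t : ℝ} (hs : s ∈ Icc (0:ℝ) 1) (ht : t ∈ Icc (0:ℝ) 1) :
    dist (γa s) (γc t) ≤ dist (comparisonPt x' y' s) (comparisonPt x' z' t) := by
  obtain ⟨γb, hb⟩ := h.1 y z
  exact ((h.2 x y z γa γb γc h1 hb h3 x' y' z' e1 e2 e3 s hs t ht).2.2.2.2.1)

/-- Comparison: between side 2 (y→z) and side 3 (x→z). -/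
lemma compare23 (h : CAT0 X) {x y z : X} {γb γc : ℝ → X}
    (h2 : IsGeodesicSeg γb y z) (h3 : IsGeodesicSeg γc x z)
    {x' y' z' : E2} (e1 : dist x' y' = dist x y) (e2 : dist y' z' = dist y z)
    (e3 : dist x' z' = dist x z) {s t : ℝ} (hs : s ∈ Icc (0:ℝ) 1) (ht : t ∈ Icc (0:ℝ) 1) :
    dist (γb s) (γc t) ≤ dist (comparisonPt y' z' s) (comparisonPt x' z' t) := by
  obtain ⟨γa, ha⟩ := h.1 x y
  exact ((h.2 x y z γa γb γc ha h2 h3 x' y' z' e1 e2 e3 s hs t ht).2.2.2.2.2)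

/-- Geodesics between two points in a CAT(0) space are unique. -/
lemma geodesic_unique (h : CAT0 X) {x y : X} {δ δ' : ℝ → X}
    (hδ : IsGeodesicSeg δ x y) (hδ' : IsGeodesicSeg δ' x y)
    {t : ℝ} (ht : t ∈ Icc (0:ℝ) 1) : δ t = δ' t := by
  obtain ⟨x', y', z', e1, e2, e3⟩ := comparison_triangle_exists x y y
  have hz : z' = y' := by
    have : dist y' z' = 0 := by rw [e2, dist_self]
    exact (dist_eq_zero.mp this).symm
  -- triangle x y y with sides δ, const, δ'
  have key := compare13 h hδ (by exact hδ') e1 e2 e3 ht ht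
  rw [hz] at key
  have : dist (comparisonPt x' y' t) (comparisonPt x' y' t) = 0 := dist_self _
  rw [this] at key
  exact dist_le_zero.mp key

/-- Distance along two comparison segments from a common point. -/
lemma compPt_dist_same_start (a b c : E2) (u : ℝ) (hu : 0 ≤ u) :
    dist (comparisonPt a b u) (comparisonPt a c u) = u * dist b c := by
  rw [e2_dist_eq, e2_dist_eq]
  rw [show (comparisonPt a b u 0 - comparisonPt a c u 0)^2 +
      (comparisonPt a b u 1 - comparisonPt a c u 1)^2
      = u^2 * ((b 0 - c 0)^2 + (b 1 - c 1)^2) by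
    simp only [compPt_apply]; ring]
  rw [Real.sqrt_mul (by positivity), Real.sqrt_sq hu]

/-- Distance along two comparison segments with a common endpoint. -/
lemma compPt_dist_same_end (a b c : E2) (u : ℝ) (hu : u ≤ 1) :
    dist (comparisonPt b c u) (comparisonPt a c u) = (1 - u) * dist a b := by
  rw [e2_dist_eq, e2_dist_eq]
  rw [show (comparisonPt b c u 0 - comparisonPt a c u 0)^2 +
      (comparisonPt b c u 1 - comparisonPt a c u 1)^2
      = (1-u)^2 * ((a 0 - b 0)^2 + (a 1 - b 1)^2) by
    simp only [compPt_apply]; ring]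
  rw [Real.sqrt_mul (by positivity), Real.sqrt_sq (by linarith)]

/-- Convexity of the distance between two geodesics (Lemma A). -/
lemma dist_convex_between_geodesics (h : CAT0 X) {σ σ' : ℝ → X} {x y p q : X}
    (hσ : IsGeodesicSeg σ x y) (hσ' : IsGeodesicSeg σ' p q)
    {u : ℝ} (hu : u ∈ Icc (0:ℝ) 1) :
    dist (σ u) (σ' u) ≤ (1 - u) * dist x p + u * dist y q := by
  obtain ⟨τ, hτ⟩ := h.1 x q
  -- triangle x y q : sides σ (x→y), τ (x→q)
  obtain ⟨x', y', q', e1, e2, e3⟩ := comparison_triangle_exists x y q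
  have k1 : dist (σ u) (τ u) ≤ u * dist y q := by
    have := compare13 h hσ hτ e1 e2 e3 hu hu
    rwa [compPt_dist_same_start x' y' q' u hu.1, e2] at this
  -- triangle x p q : sides σ' (p→q), τ (x→q)
  obtain ⟨x'', p'', q'', f1, f2, f3⟩ := comparison_triangle_exists x p q
  have k2 : dist (σ' u) (τ u) ≤ (1 - u) * dist x p := by
    have := compare23 h hσ' hτ f1 f2 f3 hu hu
    rwa [compPt_dist_same_end x'' p'' q'' u hu.2, f1] at this
  calc dist (σ u) (σ' u) ≤ dist (σ u) (τ u) + dist (τ u) (σ' u) := dist_triangle _ _ _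
    _ ≤ u * dist y q + (1 - u) * dist x p := by
        rw [dist_comm (τ u)]; linarith
    _ = (1 - u) * dist x p + u * dist y q := by ring

/-- The CN (Bruhat–Tits) inequality. -/
lemma cn_ineq (h : CAT0 X) {σ : ℝ → X} {p q : X} (hσ : IsGeodesicSeg σ p q) (x : X) :
    dist x (σ (1/2)) ^ 2 ≤ (dist x p ^2 + dist x q ^2)/2 - dist p q ^2/4 := by
  obtain ⟨γa, ha⟩ := h.1 p x
  obtain ⟨p', x', q', e1, e2, e3⟩ := comparison_triangle_exists p x q
  have key := compare13 h ha hσ e1 e2 e3 (⟨zero_le_one, le_refl 1⟩ : (1:ℝ) ∈ Icc (0:ℝ) 1)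
    (⟨by norm_num, by norm_num⟩ : (1/2:ℝ) ∈ Icc (0:ℝ) 1)
  rw [compPt_one, ha.2.1] at key
  have hmed : dist x' (comparisonPt p' q' (1/2)) ^2
      = (dist x' p' ^2 + dist x' q' ^2)/2 - dist p' q' ^2/4 := by
    rw [e2_dist_sq, e2_dist_sq, e2_dist_sq, e2_dist_sq]
    simp only [compPt_apply]
    ring
  have hsq : dist x (σ (1/2)) ^2 ≤ dist x' (comparisonPt p' q' (1/2)) ^2 := by
    apply pow_le_pow_left₀ dist_nonneg key 2
  rw [hmed, dist_comm x' p', e1, e2, e3, dist_comm p x] at hsq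
  exact hsq

/-- Uniqueness of midpoints in CAT(0). -/
lemma cat0_midpoint_unique (h : CAT0 X) {σ : ℝ → X} {p q : X} (hσ : IsGeodesicSeg σ p q)
    {x : X} (hxp : dist x p = dist p q / 2) (hxq : dist x q = dist p q / 2) :
    x = σ (1/2) := by
  have := cn_ineq h hσ x
  rw [hxp, hxq] at this
  have h0 : dist x (σ (1/2)) ^ 2 ≤ 0 := by nlinarith
  have : dist x (σ (1/2)) = 0 := by nlinarith [dist_nonneg (x := x) (y := σ (1/2))]
  exact dist_eq_zero.mp this

end CAT0Helpers

/- ### Parallel lines machinery -/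

section Parallel

variable {X : Type*} [MetricSpace X]

lemma line_seg {α : ℝ → X} (hα : Isometry α) (t₀ t₁ : ℝ) :
    IsGeodesicSeg (fun u => α ((1-u)*t₀ + u*t₁)) (α t₀) (α t₁) := by
  refine ⟨by norm_num, by norm_num, ?_⟩
  intro s _ t _
  rw [hα.dist_eq, hα.dist_eq, Real.dist_eq, Real.dist_eq]
  rw [show (1-s)*t₀ + s*t₁ - ((1-t)*t₀ + t*t₁) = -((t₀ - t₁)*(s-t)) by ring]
  rw [abs_neg, abs_mul]

/-- Comparison: between side 1 (x→y) and side 2 (y→z). -/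
lemma compare12 {X : Type*} [MetricSpace X] (h : CAT0 X) {x y z : X} {γa γb : ℝ → X}
    (h1 : IsGeodesicSeg γa x y) (h2 : IsGeodesicSeg γb y z)
    {x' y' z' : E2} (e1 : dist x' y' = dist x y) (e2 : dist y' z' = dist y z)
    (e3 : dist x' z' = dist x z) {s t : ℝ} (hs : s ∈ Icc (0:ℝ) 1) (ht : t ∈ Icc (0:ℝ) 1) :
    dist (γa s) (γb t) ≤ dist (comparisonPt x' y' s) (comparisonPt y' z' t) := by
  obtain ⟨γc, hc⟩ := h.1 x z
  exact ((h.2 x y z γa γb γc h1 h2 hc x' y' z' e1 e2 e3 s hs t ht).2.2.2.1)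

/-- The distance between corresponding points of two asymptotic lines is constant. -/
lemma shifted_dist_const {α β : ℝ → X} (h : CAT0 X) (hα : Isometry α) (hβ : Isometry β)
    (K : ℝ) (hbd : ∀ t, dist (α t) (β t) ≤ K) (a t : ℝ) :
    dist (α t) (β (t + a)) = dist (α 0) (β a) := by
  have := convex_bounded_const (fun t => dist (α t) (β (t+a)))
    (by
      intro t₀ t₁ u hu
      have hseg1 := line_seg hα t₀ t₁
      have hseg2 := line_seg hβ (t₀+a) (t₁+a)
      have key := dist_convex_between_geodesics h hseg1 hseg2 hu
      rw [show (1-u)*t₀ + u*t₁ + a = (1-u)*(t₀+a) + u*(t₁+a) by ring]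
      exact key)
    (K + |a|)
    (by
      intro t
      calc dist (α t) (β (t+a)) ≤ dist (α t) (β t) + dist (β t) (β (t+a)) := dist_triangle _ _ _
        _ ≤ K + |a| := by
            rw [hβ.dist_eq, Real.dist_eq]
            have : |t - (t+a)| = |a| := by rw [show t - (t+a) = -a by ring, abs_neg]
            rw [this]
            exact add_le_add_left (hbd t) _)
    t 0
  simpa using this

lemma aux_inner_nonpos {A B : ℝ} (h : ∀ u ∈ Icc (0:ℝ) 1, 2*u*A ≤ u^2*B) : A ≤ 0 := by
  by_contra hAc
  push_neg at hAc
  rcases le_or_gt B 0 with hB0 | hB0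
  · have := h 1 ⟨zero_le_one, le_refl _⟩
    nlinarith
  · have hAB : 0 < A + B := by linarith
    have hu : A/(A+B) ∈ Icc (0:ℝ) 1 := by
      constructor
      · positivity
      · rw [div_le_one hAB]; linarith
    have h2 := h _ hu
    have h3 : 2*A*A*(A+B) ≤ A^2*B := by
      have e1 : (2*(A/(A+B))*A) * (A+B)^2 = 2*A*A*(A+B) := by field_simp
      have e2 : ((A/(A+B))^2*B) * (A+B)^2 = A^2*B := by field_simp
      calc 2*A*A*(A+B) = (2*(A/(A+B))*A) * (A+B)^2 := e1.symm
        _ ≤ ((A/(A+B))^2*B) * (A+B)^2 :=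
            mul_le_mul_of_nonneg_right h2 (by positivity)
        _ = A^2*B := e2
    nlinarith [mul_pos (mul_pos hAc hAc) hAc, mul_pos (mul_pos hAc hAc) hB0]

/-- Euclidean: if the distance from `p` to every point of segment `[q,r]` is at least
`dist p q`, then the angle at `q` is obtuse. -/
lemma eucl_obtuse {p q r : E2}
    (hcond : ∀ u ∈ Icc (0:ℝ) 1, dist p q ≤ dist p (comparisonPt q r u)) :
    dist p q ^2 + dist q r ^2 ≤ dist p r ^2 := by
  have hAle : (p 0 - q 0)*(r 0 - q 0) + (p 1 - q 1)*(r 1 - q 1) ≤ 0 := by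
    apply aux_inner_nonpos (B := (r 0 - q 0)^2 + (r 1 - q 1)^2)
    intro u hu
    have := pow_le_pow_left₀ dist_nonneg (hcond u hu) 2
    rw [e2_dist_sq, e2_dist_sq] at this
    simp only [compPt_apply] at this
    nlinarith [this]
  have hexp : dist p r ^2 = dist p q ^2 + dist q r ^2
      - 2*((p 0 - q 0)*(r 0 - q 0) + (p 1 - q 1)*(r 1 - q 1)) := by
    rw [e2_dist_sq, e2_dist_sq, e2_dist_sq]; ring
  linarith

/-- Two geodesic lines are parallel at distance `d` with matched parametrizations. -/
def Par {X : Type*} [MetricSpace X] (α β : ℝ → X) (d : ℝ) : Prop :=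
  Isometry α ∧ Isometry β ∧ (∀ t, dist (α t) (β t) = d) ∧ ∀ t u, d ≤ dist (α t) (β u)

lemma Par.nonneg {α β : ℝ → X} {d : ℝ} (P : Par α β d) : 0 ≤ d :=
  (P.2.2.1 0) ▸ dist_nonneg

lemma Par.const {α β : ℝ → X} {d : ℝ} (P : Par α β d) (h : CAT0 X) (a t : ℝ) :
    dist (α t) (β (t + a)) = dist (α 0) (β a) :=
  shifted_dist_const h P.1 P.2.1 d (fun t => le_of_eq (P.2.2.1 t)) a t

/-- MAIN rigidity: parallel lines span a flat strip at the level of distances. -/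
lemma Par.dist_sq {α β : ℝ → X} {d : ℝ} (P : Par α β d) (h : CAT0 X) (t u : ℝ) :
    dist (α t) (β u) ^2 = (u - t)^2 + d^2 := by
  obtain ⟨hα, hβ, hconst, hmin⟩ := P
  -- step C : lower bound
  have stepC : ∀ a : ℝ, a^2 + d^2 ≤ dist (α 0) (β a) ^2 := by
    intro a
    obtain ⟨p', q', r', e1, e2, e3⟩ := comparison_triangle_exists (α 0) (β 0) (β a)
    have hseg : IsGeodesicSeg (fun u => β ((1-u)*0 + u*a)) (β 0) (β a) := line_seg hβ 0 a
    obtain ⟨γa, ha⟩ := h.1 (α 0) (β 0)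
    have hcond : ∀ v ∈ Icc (0:ℝ) 1, dist p' q' ≤ dist p' (comparisonPt q' r' v) := by
      intro v hv
      have key := compare12 h ha hseg e1 e2 e3 (⟨le_refl _, zero_le_one⟩ : (0:ℝ) ∈ Icc (0:ℝ) 1) hv
      rw [compPt_zero, ha.1] at key
      calc dist p' q' = d := by rw [e1, hconst 0]
        _ ≤ dist (α 0) (β ((1-v)*0 + v*a)) := hmin 0 _
        _ ≤ dist p' (comparisonPt q' r' v) := key
    have := eucl_obtuse hcond
    rw [e1, e2, e3] at this
    have hd : dist (α 0) (β 0) = d := hconst 0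
    have hb : dist (β 0) (β a) ^2 = a^2 := by
      rw [hβ.dist_eq, Real.dist_eq, sq_abs]
      ring_nf
    rw [hd, hb] at this
    linarith
  -- step D : upper bound
  have stepD : ∀ a : ℝ, dist (α 0) (β a) ^2 ≤ a^2 + d^2 := by
    intro a
    set m := geo h (α 0) (β a) (1/2) with hm
    have hgs := geo_spec h (α 0) (β a)
    have c1 := cn_ineq h hgs (β 0)
    have c2 := cn_ineq h hgs (α a)
    rw [dist_comm (β 0) (α 0), hconst 0] at c1
    have hbb : dist (β 0) (β a) ^2 = a^2 := by
      rw [hβ.dist_eq, Real.dist_eq, sq_abs]; ring_nf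
    have haa : dist (α a) (α 0) ^2 = a^2 := by
      rw [hα.dist_eq, Real.dist_eq, sq_abs]; ring_nf
    have hab : dist (α a) (β a) = d := hconst a
    have c3 : a^2 + d^2 ≤ dist (α a) (β 0) ^2 := by
      have e0 : dist (α a) (β 0) = dist (α 0) (β (-a)) := by
        have := Par.const ⟨hα, hβ, hconst, hmin⟩ h (-a) a
        rw [show a + -a = 0 by ring] at this
        exact this
      rw [e0]
      have := stepC (-a)
      rw [neg_sq] at this
      exact this
    have htri : dist (α a) (β 0) ≤ dist (α a) m + dist m (β 0) := dist_triangle _ _ _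
    rw [dist_comm m (β 0)] at htri
    have htri2 : dist (α a) (β 0) ^2 ≤ (dist (α a) m + dist (β 0) m)^2 :=
      pow_le_pow_left₀ dist_nonneg htri 2
    have hab2 : dist (α a) (β a) ^2 = d^2 := by rw [hab]
    rw [hbb] at c1
    rw [haa, hab2] at c2
    nlinarith [sq_nonneg (dist (α a) m - dist (β 0) m), c1, c2, c3, htri2]
  have e0 : dist (α t) (β u) = dist (α 0) (β (u - t)) := by
    have := shifted_dist_const h hα hβ d (fun t => le_of_eq (hconst t)) (u - t) t
    rw [show t + (u - t) = u by ring] at this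
    exact this
  rw [e0]
  have := stepC (u - t)
  have := stepD (u - t)
  linarith

lemma Par.dist_eq {α β : ℝ → X} {d : ℝ} (P : Par α β d) (h : CAT0 X) (t u : ℝ) :
    dist (α t) (β u) = Real.sqrt ((u - t)^2 + d^2) := by
  have := P.dist_sq h t u
  rw [← this, Real.sqrt_sq dist_nonneg]

end Parallel

/- ### Midline -/

section Midline

variable {X : Type*} [MetricSpace X]

lemma iso_dist_sq {α : ℝ → X} (hα : Isometry α) (t u : ℝ) :
    dist (α t) (α u) ^2 = (t - u)^2 := by
  rw [hα.dist_eq, Real.dist_eq, sq_abs]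

lemma half_mem_Icc : (1/2 : ℝ) ∈ Icc (0:ℝ) 1 := by norm_num

lemma midline_dist_sq (h : CAT0 X) {α β : ℝ → X} {d : ℝ} (P : Par α β d) (u t : ℝ) :
    dist (α u) (geo h (α t) (β t) (1/2)) ^2 = (u - t)^2 + (d/2)^2 := by
  have hd0 := P.nonneg
  set mc := geo h (α u) (β (2*t - u)) (1/2) with hmc
  have hgs := geo_spec h (α u) (β (2*t-u))
  have hdiag : dist (α u) (β (2*t-u)) ^2 = (2*t-2*u)^2 + d^2 := by
    rw [P.dist_sq h u (2*t-u)]; ring_nf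
  have cA : dist (α t) mc ^2 ≤ (d/2)^2 := by
    have c := cn_ineq h hgs (α t)
    have e2 : dist (α t) (β (2*t-u)) ^2 = (u-t)^2 + d^2 := by
      rw [P.dist_sq h t (2*t-u)]; ring_nf
    rw [iso_dist_sq P.1 t u, e2, hdiag] at c
    nlinarith [c]
  have cB : dist (β t) mc ^2 ≤ (d/2)^2 := by
    have c := cn_ineq h hgs (β t)
    have e1 : dist (β t) (α u) ^2 = (t-u)^2 + d^2 := by
      rw [dist_comm, P.dist_sq h u t]
    rw [e1, iso_dist_sq P.2.1 t (2*t-u), hdiag] at c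
    nlinarith [c]
  have t1 : dist (α t) mc ≤ d/2 := le_of_sq_le (by positivity) cA
  have t2 : dist (β t) mc ≤ d/2 := le_of_sq_le (by positivity) cB
  have t3 : d ≤ dist (α t) mc + dist (β t) mc := by
    have := dist_triangle (α t) mc (β t)
    rw [dist_comm mc (β t)] at this
    have hc := P.2.2.1 t
    linarith
  have e1 : dist (α t) mc = d/2 := by linarith
  have e2 : dist (β t) mc = d/2 := by linarith
  have hid : mc = geo h (α t) (β t) (1/2) := by
    apply cat0_midpoint_unique h (geo_spec h (α t) (β t))
    · rw [dist_comm mc (α t), e1, P.2.2.1 t]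
    · rw [dist_comm mc (β t), e2, P.2.2.1 t]
  have hlen : dist (α u) mc = dist (α u) (β (2*t-u)) * (1/2) :=
    hgs.dist_left half_mem_Icc
  rw [← hid, hlen, mul_pow, hdiag]
  ring

lemma midline_dist_sq' (h : CAT0 X) {α β : ℝ → X} {d : ℝ} (P : Par α β d) (u t : ℝ) :
    dist (β u) (geo h (α t) (β t) (1/2)) ^2 = (u - t)^2 + (d/2)^2 := by
  have hd0 := P.nonneg
  set mc := geo h (α (2*t-u)) (β u) (1/2) with hmc
  have hgs := geo_spec h (α (2*t-u)) (β u)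
  have hdiag : dist (α (2*t-u)) (β u) ^2 = (2*u-2*t)^2 + d^2 := by
    rw [P.dist_sq h (2*t-u) u]; ring_nf
  have cA : dist (α t) mc ^2 ≤ (d/2)^2 := by
    have c := cn_ineq h hgs (α t)
    have e2 : dist (α t) (β u) ^2 = (u-t)^2 + d^2 := P.dist_sq h t u
    rw [iso_dist_sq P.1 t (2*t-u), e2, hdiag] at c
    nlinarith [c]
  have cB : dist (β t) mc ^2 ≤ (d/2)^2 := by
    have c := cn_ineq h hgs (β t)
    have e1 : dist (β t) (α (2*t-u)) ^2 = (t-(2*t-u))^2 + d^2 := by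
      rw [dist_comm, P.dist_sq h (2*t-u) t]
    rw [e1, iso_dist_sq P.2.1 t u, hdiag] at c
    nlinarith [c]
  have t1 : dist (α t) mc ≤ d/2 := le_of_sq_le (by positivity) cA
  have t2 : dist (β t) mc ≤ d/2 := le_of_sq_le (by positivity) cB
  have t3 : d ≤ dist (α t) mc + dist (β t) mc := by
    have := dist_triangle (α t) mc (β t)
    rw [dist_comm mc (β t)] at this
    have hc := P.2.2.1 t
    linarith
  have e1 : dist (α t) mc = d/2 := by linarith
  have e2 : dist (β t) mc = d/2 := by linarith
  have hid : mc = geo h (α t) (β t) (1/2) := by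
    apply cat0_midpoint_unique h (geo_spec h (α t) (β t))
    · rw [dist_comm mc (α t), e1, P.2.2.1 t]
    · rw [dist_comm mc (β t), e2, P.2.2.1 t]
  have hlen : dist mc (β u) = dist (α (2*t-u)) (β u) * (1 - 1/2) :=
    hgs.dist_right half_mem_Icc
  rw [← hid, dist_comm (β u) mc, hlen, mul_pow, hdiag]
  ring

lemma midline_isometry (h : CAT0 X) {α β : ℝ → X} {d : ℝ} (P : Par α β d) :
    Isometry (fun t => geo h (α t) (β t) (1/2)) := by
  have hd0 := P.nonneg
  set μ := fun t => geo h (α t) (β t) (1/2) with hμ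
  have dA : ∀ u t : ℝ, dist (α u) (μ t) = Real.sqrt ((u-t)^2 + (d/2)^2) := by
    intro u t
    rw [← midline_dist_sq h P u t, Real.sqrt_sq dist_nonneg]
  have upper : ∀ t t' : ℝ, dist (μ t) (μ t') ≤ |t' - t| := by
    intro t t'
    have := dist_convex_between_geodesics h (geo_spec h (α t) (β t))
      (geo_spec h (α t') (β t')) half_mem_Icc
    rw [P.1.dist_eq, P.2.1.dist_eq, Real.dist_eq] at this
    calc dist (μ t) (μ t') ≤ (1 - 1/2) * |t - t'| + 1/2 * |t - t'| := this
      _ = |t - t'| := by ring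
      _ = |t' - t| := abs_sub_comm _ _
  have lower : ∀ t t' : ℝ, t ≤ t' → t' - t ≤ dist (μ t) (μ t') := by
    intro t t' htt
    apply le_of_forall_pos_le_add
    intro ε hε
    set c := (d/2)^2 with hc
    have hc0 : 0 ≤ c := by positivity
    set m0 := max 1 (c/(2*ε)) with hm0
    have hm01 : (1:ℝ) ≤ m0 := le_max_left _ _
    have hm0pos : 0 < m0 := lt_of_lt_of_le one_pos hm01
    have hcm0 : c/(2*m0) ≤ ε := by
      rw [div_le_iff₀ (by positivity)]
      have h1 : c/(2*ε) ≤ m0 := le_max_right _ _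
      rw [div_le_iff₀ (by positivity)] at h1
      linarith
    set u := t - m0 with hu
    have k1 : t' - u ≤ dist (α u) (μ t') := by
      rw [dA u t']
      have : t' - u ≤ Real.sqrt ((u - t')^2) := by
        rw [Real.sqrt_sq_eq_abs]
        rw [abs_sub_comm]
        exact le_abs_self _
      calc t' - u ≤ Real.sqrt ((u - t')^2) := this
        _ ≤ Real.sqrt ((u - t')^2 + c) := Real.sqrt_le_sqrt (by linarith)
    have k2 : dist (α u) (μ t) ≤ m0 + ε := by
      rw [dA u t]
      have e0 : (u - t)^2 = m0^2 := by rw [hu]; ring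
      rw [e0]
      have hkey : (m0 + c/(2*m0))^2 = m0^2 + c + (c/(2*m0))^2 := by
        field_simp
        ring
      calc Real.sqrt (m0^2 + c) ≤ Real.sqrt ((m0 + c/(2*m0))^2) := by
            apply Real.sqrt_le_sqrt
            rw [hkey]
            nlinarith [sq_nonneg (c/(2*m0))]
        _ = m0 + c/(2*m0) := Real.sqrt_sq (by positivity)
        _ ≤ m0 + ε := by linarith
    have tri : dist (α u) (μ t') ≤ dist (α u) (μ t) + dist (μ t) (μ t') := dist_triangle _ _ _
    have : t' - u ≤ m0 + ε + dist (μ t) (μ t') := by linarith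
    rw [hu] at this
    linarith
  apply Isometry.of_dist_eq
  intro t t'
  rw [Real.dist_eq]
  rcases le_total t t' with htt | htt
  · have l := lower t t' htt
    have u := upper t t'
    rw [abs_of_nonneg (by linarith : 0 ≤ t' - t)] at u
    rw [abs_of_nonpos (by linarith : t - t' ≤ 0)]
    linarith
  · have l := lower t' t htt
    have u := upper t' t
    rw [abs_of_nonneg (by linarith : 0 ≤ t - t')] at u
    rw [dist_comm (μ t') (μ t)] at l u
    rw [abs_of_nonneg (by linarith : 0 ≤ t - t')]
    linarith

end Midline

/- ### The strip family -/

section Strip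

variable {X : Type*} [MetricSpace X]

/-- The horizontal curve at height `s`. -/
noncomputable def Lf {X : Type*} [MetricSpace X] (h : CAT0 X) (α β : ℝ → X) (s : ℝ) :
    ℝ → X := fun t => geo h (α t) (β t) s

lemma strip_vert (h : CAT0 X) {α β : ℝ → X} {d : ℝ} (P : Par α β d) (t : ℝ)
    {s s' : ℝ} (hs : s ∈ Icc (0:ℝ) 1) (hs' : s' ∈ Icc (0:ℝ) 1) :
    dist (Lf h α β s t) (Lf h α β s' t) = d * |s - s'| := by
  have := (geo_spec h (α t) (β t)).2.2 s hs s' hs'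
  rw [P.2.2.1 t] at this
  exact this

lemma strip_alpha (h : CAT0 X) {α β : ℝ → X} {d : ℝ} (P : Par α β d) (t : ℝ)
    {s : ℝ} (hs : s ∈ Icc (0:ℝ) 1) : dist (α t) (Lf h α β s t) = d * s := by
  have := (geo_spec h (α t) (β t)).dist_left hs
  rw [P.2.2.1 t] at this
  exact this

lemma strip_beta (h : CAT0 X) {α β : ℝ → X} {d : ℝ} (P : Par α β d) (t : ℝ)
    {s : ℝ} (hs : s ∈ Icc (0:ℝ) 1) : dist (Lf h α β s t) (β t) = d * (1 - s) := by
  have := (geo_spec h (α t) (β t)).dist_right hs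
  rw [P.2.2.1 t] at this
  exact this

lemma strip_min (h : CAT0 X) {α β : ℝ → X} {d : ℝ} (P : Par α β d) (t t' : ℝ)
    {s s' : ℝ} (hs : s ∈ Icc (0:ℝ) 1) (hs' : s' ∈ Icc (0:ℝ) 1) (hss : s ≤ s') :
    (s' - s) * d ≤ dist (Lf h α β s t) (Lf h α β s' t') := by
  have hd0 := P.nonneg
  have A : d ≤ dist (α t) (β t') := P.2.2.2 t t'
  have B : s' * d ≤ dist (α t) (Lf h α β s' t') := by
    have h1 : dist (α t) (β t') ≤ dist (α t) (Lf h α β s' t') + dist (Lf h α β s' t') (β t') :=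
      dist_triangle _ _ _
    have h2 := strip_beta h P t' hs'
    nlinarith
  have C : dist (α t) (Lf h α β s' t') ≤ dist (α t) (Lf h α β s t)
      + dist (Lf h α β s t) (Lf h α β s' t') := dist_triangle _ _ _
  have h3 := strip_alpha h P t hs
  nlinarith

lemma strip_par (h : CAT0 X) {α β : ℝ → X} {d : ℝ} (P : Par α β d)
    {s s' : ℝ} (hs : s ∈ Icc (0:ℝ) 1) (hs' : s' ∈ Icc (0:ℝ) 1) (hss : s ≤ s')
    (hL : Isometry (Lf h α β s)) (hL' : Isometry (Lf h α β s')) :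
    Par (Lf h α β s) (Lf h α β s') ((s' - s) * d) := by
  refine ⟨hL, hL', ?_, ?_⟩
  · intro t
    rw [strip_vert h P t hs hs', abs_of_nonpos (by linarith)]
    ring
  · intro t u
    exact strip_min h P t u hs hs' hss

lemma strip_mid_of_le (h : CAT0 X) {α β : ℝ → X} {d : ℝ} (P : Par α β d)
    {s s' : ℝ} (hs : s ∈ Icc (0:ℝ) 1) (hs' : s' ∈ Icc (0:ℝ) 1) (hss : s ≤ s')
    (hL : Isometry (Lf h α β s)) (hL' : Isometry (Lf h α β s')) :
    Isometry (Lf h α β ((s + s')/2)) := by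
  have hd0 := P.nonneg
  have Ppair := strip_par h P hs hs' hss hL hL'
  have hmidiso := midline_isometry h Ppair
  have hmem : (s+s')/2 ∈ Icc (0:ℝ) 1 := by
    constructor
    · have := hs.1; have := hs'.1; linarith
    · have := hs.2; have := hs'.2; linarith
  have hid : ∀ t, Lf h α β ((s+s')/2) t = geo h (Lf h α β s t) (Lf h α β s' t) (1/2) := by
    intro t
    apply cat0_midpoint_unique h (geo_spec h (Lf h α β s t) (Lf h α β s' t))
    · rw [Ppair.2.2.1 t]
      have := strip_vert h P t hmem hs
      rw [this, show |(s+s')/2 - s| = (s'-s)/2 by rw [abs_of_nonneg (by linarith)]; ring]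
      ring
    · rw [Ppair.2.2.1 t]
      have := strip_vert h P t hmem hs'
      rw [this, show |(s+s')/2 - s'| = (s'-s)/2 by rw [abs_of_nonpos (by linarith)]; ring]
      ring
  have : Lf h α β ((s+s')/2) = fun t => geo h (Lf h α β s t) (Lf h α β s' t) (1/2) :=
    funext hid
  rw [this]
  exact hmidiso

lemma strip_mid (h : CAT0 X) {α β : ℝ → X} {d : ℝ} (P : Par α β d)
    {s s' : ℝ} (hs : s ∈ Icc (0:ℝ) 1) (hs' : s' ∈ Icc (0:ℝ) 1)
    (hL : Isometry (Lf h α β s)) (hL' : Isometry (Lf h α β s')) :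
    Isometry (Lf h α β ((s + s')/2)) := by
  rcases le_total s s' with hss | hss
  · exact strip_mid_of_le h P hs hs' hss hL hL'
  · rw [show (s+s')/2 = (s'+s)/2 by ring]
    exact strip_mid_of_le h P hs' hs hss hL' hL

lemma strip_base0 (h : CAT0 X) {α β : ℝ → X} {d : ℝ} (P : Par α β d) :
    Isometry (Lf h α β 0) := by
  have : Lf h α β 0 = α := funext fun t => (geo_spec h (α t) (β t)).1
  rw [this]; exact P.1

lemma strip_base1 (h : CAT0 X) {α β : ℝ → X} {d : ℝ} (P : Par α β d) :
    Isometry (Lf h α β 1) := by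
  have : Lf h α β 1 = β := funext fun t => (geo_spec h (α t) (β t)).2.1
  rw [this]; exact P.2.1

lemma dyadic_mem (k : ℕ) {j : ℕ} (hj : j ≤ 2^k) :
    ((j:ℝ)/2^k) ∈ Icc (0:ℝ) 1 := by
  constructor
  · positivity
  · rw [div_le_one (by positivity)]
    exact_mod_cast hj

lemma strip_dyadic (h : CAT0 X) {α β : ℝ → X} {d : ℝ} (P : Par α β d) :
    ∀ k : ℕ, ∀ j : ℕ, j ≤ 2^k → Isometry (Lf h α β ((j:ℝ)/2^k)) := by
  intro k
  induction k with
  | zero =>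
    intro j hj
    interval_cases j
    · simpa using strip_base0 h P
    · simpa using strip_base1 h P
  | succ k ih =>
    intro j hj
    rcases Nat.even_or_odd j with ⟨i, hi⟩ | ⟨i, hi⟩
    · have hik : i ≤ 2^k := by
        subst hi
        rw [pow_succ] at hj
        omega
      have : (j:ℝ)/2^(k+1) = (i:ℝ)/2^k := by
        subst hi
        push_cast
        rw [pow_succ]
        field_simp
        ring
      rw [this]
      exact ih i hik
    · have hik : i + 1 ≤ 2^k := by
        subst hi
        rw [pow_succ] at hj
        omega
      have hik' : i ≤ 2^k := le_trans (Nat.le_succ i) hik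
      have : (j:ℝ)/2^(k+1) = ((i:ℝ)/2^k + ((i:ℝ)+1)/2^k)/2 := by
        subst hi
        push_cast
        rw [pow_succ]
        field_simp
        ring
      rw [this]
      have h2 : ((i:ℝ)+1)/2^k = (((i+1:ℕ)):ℝ)/2^k := by push_cast; ring
      rw [h2]
      exact strip_mid h P (dyadic_mem k hik') (dyadic_mem k hik) (ih i hik') (ih (i+1) hik)

/-- Dyadic approximation of a point of `[0,1]`. -/
lemma dyadic_approx {s : ℝ} (hs : s ∈ Icc (0:ℝ) 1) (k : ℕ) :
    ∃ j : ℕ, j ≤ 2^k ∧ |s - (j:ℝ)/2^k| ≤ 1/2^k := by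
  refine ⟨⌊s * 2^k⌋₊, ?_, ?_⟩
  · have h1 : s * 2^k ≤ ((2^k : ℕ) : ℝ) := by
      push_cast
      nlinarith [hs.2, (by positivity : (0:ℝ) < 2^k)]
    calc ⌊s * 2^k⌋₊ ≤ ⌊((2^k : ℕ) : ℝ)⌋₊ := Nat.floor_mono h1
      _ = 2^k := Nat.floor_natCast _
  · have h2pos : (0:ℝ) < 2^k := by positivity
    have hfl : ((⌊s * 2^k⌋₊ : ℕ) : ℝ) ≤ s * 2^k := Nat.floor_le (mul_nonneg hs.1 (by positivity))
    have hfu : s * 2^k < (⌊s * 2^k⌋₊ : ℝ) + 1 := Nat.lt_floor_add_one _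
    rw [abs_of_nonneg (by rw [sub_nonneg, div_le_iff₀ h2pos]; exact hfl)]
    rw [sub_le_iff_le_add, ← add_div, le_div_iff₀ h2pos]
    linarith

lemma strip_isometry (h : CAT0 X) {α β : ℝ → X} {d : ℝ} (P : Par α β d)
    {s : ℝ} (hs : s ∈ Icc (0:ℝ) 1) : Isometry (Lf h α β s) := by
  have hd0 := P.nonneg
  apply Isometry.of_dist_eq
  intro t t'
  rw [Real.dist_eq]
  -- approximate by dyadics
  have key : ∀ ε : ℝ, 0 < ε → ∃ q : ℝ, q ∈ Icc (0:ℝ) 1 ∧ Isometry (Lf h α β q) ∧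
      d * |s - q| ≤ ε := by
    intro ε hε
    obtain ⟨k, hk⟩ := exists_pow_lt_of_lt_one (div_pos hε (by linarith : (0:ℝ) < d+1))
      (by norm_num : (1/2 : ℝ) < 1)
    obtain ⟨j, hj, hjs⟩ := dyadic_approx hs k
    refine ⟨(j:ℝ)/2^k, dyadic_mem k hj, strip_dyadic h P k j hj, ?_⟩
    have h1 : (1/2:ℝ)^k = 1/2^k := by rw [div_pow, one_pow]
    rw [h1] at hk
    have h2 : d * |s - (j:ℝ)/2^k| ≤ d * (1/2^k) :=
      mul_le_mul_of_nonneg_left hjs hd0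
    have h3 : d * (1/2^k) ≤ (d+1) * (1/2^k) := by
      apply mul_le_mul_of_nonneg_right (by linarith) (by positivity)
    have h4 : (d+1) * (1/2^k) < (d+1) * (ε/(d+1)) :=
      mul_lt_mul_of_pos_left hk (by positivity)
    have h5 : (d+1) * (ε/(d+1)) = ε := by field_simp
    linarith
  apply le_antisymm
  · apply le_of_forall_pos_le_add
    intro ε hε
    obtain ⟨q, hq, hLq, hdq⟩ := key (ε/2) (by positivity)
    have hmid : dist (Lf h α β q t) (Lf h α β q t') = |t - t'| := by
      rw [hLq.dist_eq, Real.dist_eq]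
    have w1 : dist (Lf h α β s t) (Lf h α β q t) ≤ ε/2 := by
      rw [strip_vert h P t hs hq]; exact hdq
    have w2 : dist (Lf h α β q t') (Lf h α β s t') ≤ ε/2 := by
      rw [strip_vert h P t' hq hs, abs_sub_comm]; exact hdq
    calc dist (Lf h α β s t) (Lf h α β s t')
        ≤ dist (Lf h α β s t) (Lf h α β q t) + dist (Lf h α β q t) (Lf h α β s t') :=
          dist_triangle _ _ _
      _ ≤ dist (Lf h α β s t) (Lf h α β q t) + (dist (Lf h α β q t) (Lf h α β q t')
          + dist (Lf h α β q t') (Lf h α β s t')) := by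
          have := dist_triangle (Lf h α β q t) (Lf h α β q t') (Lf h α β s t')
          linarith
      _ ≤ |t - t'| + ε := by
          rw [hmid]
          linarith
  · apply le_of_forall_pos_le_add
    intro ε hε
    obtain ⟨q, hq, hLq, hdq⟩ := key (ε/2) (by positivity)
    have hmid : dist (Lf h α β q t) (Lf h α β q t') = |t - t'| := by
      rw [hLq.dist_eq, Real.dist_eq]
    have w1 : dist (Lf h α β q t) (Lf h α β s t) ≤ ε/2 := by
      rw [strip_vert h P t hq hs, abs_sub_comm]; exact hdq
    have w2 : dist (Lf h α β s t') (Lf h α β q t') ≤ ε/2 := by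
      rw [strip_vert h P t' hs hq]; exact hdq
    have tri1 : dist (Lf h α β q t) (Lf h α β q t')
        ≤ dist (Lf h α β q t) (Lf h α β s t) + dist (Lf h α β s t) (Lf h α β q t') :=
      dist_triangle _ _ _
    have tri2 : dist (Lf h α β s t) (Lf h α β q t')
        ≤ dist (Lf h α β s t) (Lf h α β s t') + dist (Lf h α β s t') (Lf h α β q t') :=
      dist_triangle _ _ _
    rw [hmid] at tri1
    linarith

lemma strip_dist_sq (h : CAT0 X) {α β : ℝ → X} {d : ℝ} (P : Par α β d)
    {s s' : ℝ} (hs : s ∈ Icc (0:ℝ) 1) (hs' : s' ∈ Icc (0:ℝ) 1) (t t' : ℝ) :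
    dist (Lf h α β s t) (Lf h α β s' t') ^2 = (t' - t)^2 + ((s' - s)*d)^2 := by
  rcases le_total s s' with hss | hss
  · have Ppair := strip_par h P hs hs' hss (strip_isometry h P hs) (strip_isometry h P hs')
    exact Ppair.dist_sq h t t'
  · have Ppair := strip_par h P hs' hs hss (strip_isometry h P hs') (strip_isometry h P hs)
    have := Ppair.dist_sq h t' t
    rw [dist_comm]
    rw [this]
    ring

end Strip


/-- (Flat Strip Theorem) In a CAT(0) space, if two geodesic lines `γ₁, γ₂ : ℝ → X` are
asymptotic, then the convex hull of `γ₁(ℝ) ∪ γ₂(ℝ)` is isometric to a flat strip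
`ℝ × [0,D] ⊆ E²`. -/
theorem cat0_flat_strip {X : Type*} [MetricSpace X] (h : CAT0 X)
    (γ₁ γ₂ : ℝ → X) (h₁ : Isometry γ₁) (h₂ : Isometry γ₂)
    (hasymp : ∃ K : ℝ, ∀ t : ℝ, dist (γ₁ t) (γ₂ t) ≤ K) :
    ∃ D : ℝ, 0 ≤ D ∧
      Nonempty ({v : E2 // v 1 ∈ Set.Icc (0:ℝ) D} ≃ᵢ
        ↥(geodConvexHull (Set.range γ₁ ∪ Set.range γ₂))) := by
  classical
  obtain ⟨K, hK⟩ := hasymp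
  set F : ℝ → ℝ := fun a => dist (γ₁ 0) (γ₂ a) with hFdef
  have hFcont : Continuous F := continuous_const.dist h₂.continuous
  have hF0 : 0 ≤ F 0 := dist_nonneg
  set M : ℝ := 2 * F 0 + 1 with hM
  have hM0 : (0:ℝ) ≤ M := by simp only [hM]; linarith
  obtain ⟨a₀, ha₀mem, ha₀min⟩ := isCompact_Icc.exists_isMinOn
    (s := Icc (-M) M) ⟨0, by constructor <;> linarith⟩ hFcont.continuousOn
  have hmin0 : F a₀ ≤ F 0 := isMinOn_iff.mp ha₀min 0 (by constructor <;> linarith)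
  have hglobal : ∀ a, F a₀ ≤ F a := by
    intro a
    rcases le_or_gt (|a|) M with hcase | hcase
    · exact isMinOn_iff.mp ha₀min a (abs_le.mp hcase)
    · have hFa : |a| - F 0 ≤ F a := by
        have htr : dist (γ₂ 0) (γ₂ a) ≤ dist (γ₂ 0) (γ₁ 0) + dist (γ₁ 0) (γ₂ a) :=
          dist_triangle _ _ _
        have e1 : dist (γ₂ 0) (γ₂ a) = |a| := by
          rw [h₂.dist_eq, Real.dist_eq, abs_sub_comm, sub_zero]
        have e2 : dist (γ₂ 0) (γ₁ 0) = F 0 := dist_comm _ _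
        rw [e1, e2] at htr
        simp only [hFdef] at htr ⊢
        linarith
      have : F 0 + 1 < F a := by simp only [hM] at hcase; linarith
      linarith
  have hconst : ∀ a t, dist (γ₁ t) (γ₂ (t + a)) = dist (γ₁ 0) (γ₂ a) :=
    shifted_dist_const h h₁ h₂ K hK
  set γ₂' : ℝ → X := fun t => γ₂ (t + a₀) with hγ₂'def
  have h₂' : Isometry γ₂' := by
    apply Isometry.of_dist_eq
    intro t u
    simp only [hγ₂'def]
    rw [h₂.dist_eq, Real.dist_eq, Real.dist_eq]
    congr 1
    ring
  set D : ℝ := dist (γ₁ 0) (γ₂' 0) with hDdef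
  have hD0 : 0 ≤ D := dist_nonneg
  have hDF : D = F a₀ := by simp only [hDdef, hγ₂'def, hFdef, zero_add]
  have P : Par γ₁ γ₂' D := by
    refine ⟨h₁, h₂', ?_, ?_⟩
    · intro t
      have := hconst a₀ t
      simp only [hγ₂'def]
      rw [this, hDF, hFdef]
    · intro t u
      have e1 : γ₂' u = γ₂ (t + (u + a₀ - t)) := by
        simp only [hγ₂'def]
        congr 1
        ring
      rw [e1, hconst (u + a₀ - t) t, hDF]
      exact hglobal _
  -- scaling helper
  have hscale : ∀ x : ℝ, x ∈ Icc (0:ℝ) D → (x/D ∈ Icc (0:ℝ) 1 ∧ D * (x/D) = x) := by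
    intro x hx
    rcases eq_or_lt_of_le hD0 with hDeq | hDpos
    · have hx0 : x = 0 := le_antisymm (by rw [← hDeq] at hx; exact hx.2) hx.1
      rw [hx0, zero_div]
      exact ⟨⟨le_refl _, zero_le_one⟩, by rw [mul_zero]⟩
    · refine ⟨⟨div_nonneg hx.1 hD0, (div_le_one hDpos).2 hx.2⟩, ?_⟩
      field_simp
  -- the strip map
  set E : {v : E2 // v 1 ∈ Icc (0:ℝ) D} → X :=
    fun v => Lf h γ₁ γ₂' (v.1 1 / D) (v.1 0) with hEdef
  have hEdist : ∀ v w : {v : E2 // v 1 ∈ Icc (0:ℝ) D}, dist (E v) (E w) = dist v w := by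
    intro v w
    obtain ⟨hv1, hv2⟩ := hscale _ v.2
    obtain ⟨hw1, hw2⟩ := hscale _ w.2
    have hsq := strip_dist_sq h P hv1 hw1 (v.1 0) (w.1 0)
    have e1 : (w.1 1 / D - v.1 1 / D) * D = w.1 1 - v.1 1 := by
      rw [sub_mul, mul_comm (w.1 1 / D) D, mul_comm (v.1 1 / D) D, hv2, hw2]
    rw [e1] at hsq
    have e2 : dist v w ^2 = (w.1 0 - v.1 0)^2 + (w.1 1 - v.1 1)^2 := by
      rw [Subtype.dist_eq, e2_dist_sq]
      ring
    apply dist_eq_of_sq_eq dist_nonneg dist_nonneg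
    rw [hsq, e2]
  have hEiso : Isometry E := Isometry.of_dist_eq hEdist
  -- every strip point is in the range of E
  have hmk : ∀ (t s : ℝ), s ∈ Icc (0:ℝ) 1 →
      ∃ v : {v : E2 // v 1 ∈ Icc (0:ℝ) D}, E v = Lf h γ₁ γ₂' s t := by
    intro t s hsmem
    have hmem : (!₂[t, D*s] : E2) 1 ∈ Icc (0:ℝ) D := by
      show D*s ∈ Icc (0:ℝ) D
      constructor
      · exact mul_nonneg hD0 hsmem.1
      · calc D*s ≤ D*1 := mul_le_mul_of_nonneg_left hsmem.2 hD0
          _ = D := mul_one D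
    refine ⟨⟨!₂[t, D*s], hmem⟩, ?_⟩
    show Lf h γ₁ γ₂' ((!₂[t, D*s] : E2) 1 / D) ((!₂[t, D*s] : E2) 0) = Lf h γ₁ γ₂' s t
    show Lf h γ₁ γ₂' (D*s/D) t = Lf h γ₁ γ₂' s t
    rcases eq_or_lt_of_le hD0 with hDeq | hDpos
    · have e0 : D*s/D = 0 := by rw [← hDeq]; simp
      rw [e0]
      have := strip_vert h P t (⟨le_refl _, zero_le_one⟩ : (0:ℝ) ∈ Icc (0:ℝ) 1) hsmem
      rw [← hDeq, zero_mul] at this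
      exact dist_eq_zero.mp this
    · rw [mul_div_cancel_left₀ s (ne_of_gt hDpos)]
  set Eset : Set X := Set.range E with hEsetdef
  -- Eset is closed
  have hstripclosed : IsClosed {v : E2 | v 1 ∈ Icc (0:ℝ) D} :=
    IsClosed.preimage ((continuous_apply 1).comp (PiLp.continuous_ofLp 2 _)) isClosed_Icc
  haveI : CompleteSpace {v : E2 // v 1 ∈ Icc (0:ℝ) D} := hstripclosed.completeSpace_coe
  have hclosed : IsClosed Eset := hEiso.isClosedEmbedding.isClosed_range
  -- Eset contains the two lines
  have hsub : (Set.range γ₁ ∪ Set.range γ₂) ⊆ Eset := by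
    apply union_subset
    · rintro x ⟨t, rfl⟩
      obtain ⟨v, hv⟩ := hmk t 0 ⟨le_refl _, zero_le_one⟩
      have : Lf h γ₁ γ₂' 0 t = γ₁ t := (geo_spec h (γ₁ t) (γ₂' t)).1
      exact ⟨v, by rw [hv, this]⟩
    · rintro x ⟨u, rfl⟩
      obtain ⟨v, hv⟩ := hmk (u - a₀) 1 ⟨zero_le_one, le_refl _⟩
      have e1 : Lf h γ₁ γ₂' 1 (u - a₀) = γ₂' (u - a₀) :=
        (geo_spec h (γ₁ (u - a₀)) (γ₂' (u - a₀))).2.1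
      have e2 : γ₂' (u - a₀) = γ₂ u := by
        simp only [hγ₂'def]
        congr 1
        ring
      exact ⟨v, by rw [hv, e1, e2]⟩
  -- Eset is geodesically convex
  have hconv : GeodConvex Eset := by
    rintro x ⟨v, rfl⟩ y ⟨w, rfl⟩
    set cl : ℝ → ℝ := fun u => max 0 (min 1 u) with hcl
    have hclmem : ∀ u, cl u ∈ Icc (0:ℝ) 1 :=
      fun u => ⟨le_max_left _ _, max_le zero_le_one (min_le_left _ _)⟩
    have hclid : ∀ u ∈ Icc (0:ℝ) 1, cl u = u := by
      intro u hu
      simp only [hcl]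
      rw [min_eq_right hu.2, max_eq_right hu.1]
    have hcmem : ∀ u : ℝ, ((1 - cl u) • v.1 + cl u • w.1 : E2) 1 ∈ Icc (0:ℝ) D := by
      intro u
      have hv := v.2
      have hw := w.2
      have hu := hclmem u
      have e : ((1 - cl u) • v.1 + cl u • w.1 : E2) 1 = (1 - cl u) * v.1 1 + cl u * w.1 1 := by
        simp
      rw [e]
      constructor
      · have := hv.1; have := hw.1; have := hu.1; have := hu.2; nlinarith
      · have := hv.2; have := hw.2; have := hu.1; have := hu.2; nlinarith
    set c : ℝ → {v : E2 // v 1 ∈ Icc (0:ℝ) D} :=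
      fun u => ⟨(1 - cl u) • v.1 + cl u • w.1, hcmem u⟩ with hcdef
    have hseg : ∀ s u : ℝ, dist ((1-s) • v.1 + s • w.1 : E2) ((1-u) • v.1 + u • w.1 : E2)
        = |s - u| * dist v.1 w.1 := by
      intro s u
      rw [dist_eq_norm]
      have e : ((1-s) • v.1 + s • w.1 : E2) - ((1-u) • v.1 + u • w.1) = (s-u) • (w.1 - v.1) := by
        module
      rw [e, norm_smul, Real.norm_eq_abs, ← dist_eq_norm, dist_comm w.1 v.1]
    refine ⟨fun u => E (c u), ⟨?_, ?_, ?_⟩, ?_⟩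
    · have e0 : cl 0 = 0 := hclid 0 ⟨le_refl _, zero_le_one⟩
      have : c 0 = v := by
        apply Subtype.ext
        show (1 - cl 0) • v.1 + cl 0 • w.1 = v.1
        rw [e0]
        simp
      show E (c 0) = E v
      rw [this]
    · have e1 : cl 1 = 1 := hclid 1 ⟨zero_le_one, le_refl _⟩
      have : c 1 = w := by
        apply Subtype.ext
        show (1 - cl 1) • v.1 + cl 1 • w.1 = w.1
        rw [e1]
        simp
      show E (c 1) = E w
      rw [this]
    · intro s hs u hu
      show dist (E (c s)) (E (c u)) = dist (E v) (E w) * |s - u|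
      rw [hEdist (c s) (c u), Subtype.dist_eq]
      show dist ((1 - cl s) • v.1 + cl s • w.1 : E2) ((1 - cl u) • v.1 + cl u • w.1) = _
      rw [hclid s hs, hclid u hu, hseg s u]
      rw [hEdist v w, Subtype.dist_eq]
      ring
    · intro u _
      exact ⟨c u, rfl⟩
  -- Eset is contained in every closed geodesically convex set containing the lines
  have hEsubC : ∀ C : Set X, (IsClosed C ∧ GeodConvex C ∧ (Set.range γ₁ ∪ Set.range γ₂) ⊆ C) →
      Eset ⊆ C := by
    rintro C ⟨-, hCconv, hCsub⟩ x ⟨v, rfl⟩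
    obtain ⟨hs1, _⟩ := hscale _ v.2
    have hx1 : γ₁ (v.1 0) ∈ C := hCsub (mem_union_left _ ⟨v.1 0, rfl⟩)
    have hx2 : γ₂' (v.1 0) ∈ C := hCsub (mem_union_right _ ⟨v.1 0 + a₀, rfl⟩)
    obtain ⟨δ, hδ, hδC⟩ := hCconv (γ₁ (v.1 0)) hx1 (γ₂' (v.1 0)) hx2
    have e : E v = δ (v.1 1 / D) :=
      geodesic_unique h (geo_spec h (γ₁ (v.1 0)) (γ₂' (v.1 0))) hδ hs1
    rw [e]
    exact hδC _ hs1
  have hull_eq : geodConvexHull (Set.range γ₁ ∪ Set.range γ₂) = Eset := by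
    apply subset_antisymm
    · exact sInter_subset_of_mem ⟨hclosed, hconv, hsub⟩
    · intro x hx
      rw [geodConvexHull, mem_sInter]
      intro C hC
      exact hEsubC C hC hx
  refine ⟨D, hD0, ⟨?_⟩⟩
  have hmemhull : ∀ v, E v ∈ geodConvexHull (Set.range γ₁ ∪ Set.range γ₂) := by
    intro v
    rw [hull_eq]
    exact ⟨v, rfl⟩
  set f : {v : E2 // v 1 ∈ Icc (0:ℝ) D} → ↥(geodConvexHull (Set.range γ₁ ∪ Set.range γ₂)) :=
    fun v => ⟨E v, hmemhull v⟩ with hfdef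
  have hfbij : Function.Bijective f := by
    constructor
    · intro v w hvw
      have : E v = E w := congrArg Subtype.val hvw
      have hd : dist v w = 0 := by rw [← hEdist, this, dist_self]
      exact dist_eq_zero.mp hd
    · rintro ⟨x, hx⟩
      rw [hull_eq] at hx
      obtain ⟨v, hv⟩ := hx
      exact ⟨v, Subtype.ext hv⟩
  exact
    { toEquiv := Equiv.ofBijective f hfbij
      isometry_toFun := Isometry.of_dist_eq fun v w => by
        show dist (f v) (f w) = dist v w
        rw [Subtype.dist_eq]
        exact hEdist v w }
end
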